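/- arXiv:1702.02828 — 5 statements merged into one kernel-verified Lean document; each statement's English description precedes it below -/
import Mathlib

section
/- Let M and L be integers with M ≥ 10 and 1 ≤ L ≤ M/10, and let S = {ω ∈ {0,1}^M : ‖ω‖₁ = L}. Then there exists a subset A ⊆ S with cardinality at least √(binomial(M, L)) such that the Hamming distance between any two distinct elements of A is at least L/5. -/
open Finset
open Nat

private lemma pow_self_le_three_pow_mul_factorial (t : ℕ) : t ^ t ≤ 3 ^ t * t ! := by
  induction t with
  | zero => simp
  | succ t ih =>
    have key : (t + 1) ^ t ≤ 3 * t ^ t := by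
      rcases Nat.eq_zero_or_pos t with h | h
      · subst h; simp
      · have htR : (0:ℝ) < (t:ℝ) := by exact_mod_cast h
        have h1 : ((t:ℝ) + 1) ^ t ≤ 3 * (t:ℝ) ^ t := by
          have e1 : ((t:ℝ) + 1) = (t:ℝ) * (1 + 1 / t) := by field_simp
          have e2 : (1 + 1 / (t:ℝ)) ^ t ≤ Real.exp (1 / t) ^ t := by
            apply pow_le_pow_left₀ (by positivity)
            have := Real.add_one_le_exp (1 / (t:ℝ))
            linarith
          have e3 : Real.exp (1 / (t:ℝ)) ^ t = Real.exp 1 := by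
            rw [← Real.exp_nat_mul]
            congr 1
            field_simp
          have e4 : Real.exp 1 ≤ 3 := by
            have := Real.exp_one_lt_d9
            linarith
          calc ((t:ℝ) + 1) ^ t = (t:ℝ) ^ t * (1 + 1 / t) ^ t := by
                rw [e1, mul_pow]
            _ ≤ (t:ℝ) ^ t * 3 := by
                apply mul_le_mul_of_nonneg_left _ (by positivity)
                rw [e3] at e2; linarith
            _ = 3 * (t:ℝ) ^ t := by ring
        exact_mod_cast h1
    calc (t + 1) ^ (t + 1) = (t + 1) * (t + 1) ^ t := by ring
      _ ≤ (t + 1) * (3 * t ^ t) := Nat.mul_le_mul_left _ key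
      _ ≤ (t + 1) * (3 * (3 ^ t * t !)) := by
          exact Nat.mul_le_mul_left _ (Nat.mul_le_mul_left _ ih)
      _ = 3 ^ (t + 1) * (t + 1)! := by
          rw [Nat.factorial_succ]; ring

private lemma sq_succ_le_four_pow {t : ℕ} (ht : 1 ≤ t) : (t + 1) ^ 2 ≤ 4 ^ t := by
  induction t with
  | zero => omega
  | succ t ih =>
    rcases Nat.eq_zero_or_pos t with h | h
    · subst h; norm_num
    · have := ih h
      have h2 : (t + 2) ^ 2 ≤ 4 * (t + 1) ^ 2 := by nlinarith
      calc (t + 2) ^ 2 ≤ 4 * (t + 1) ^ 2 := h2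
        _ ≤ 4 * 4 ^ t := by omega
        _ = 4 ^ (t + 1) := by ring

private lemma choose_mono_left {n k l : ℕ} (hkl : k ≤ l) (h : 2 * l ≤ n) :
    n.choose k ≤ n.choose l := by
  induction hkl using Nat.decreasingInduction with
  | self => exact le_rfl
  | of_succ m hm ih =>
    refine (Nat.choose_le_succ_of_lt_half_left ?_).trans ih
    omega
private lemma W3 (t : ℕ) (ht : 1 ≤ t) (L : ℕ) (hL19 : L ≤ 19 * t) :
    (t + 1) ^ 2 * 81 ^ t * L ^ (3 * t) ≤ 64 ^ t * 8 ^ (7 * t) * (t !) ^ 3 := by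
  have h1 : L ^ (3 * t) ≤ 19 ^ (3 * t) * t ^ (3 * t) := by
    calc L ^ (3 * t) ≤ (19 * t) ^ (3 * t) := Nat.pow_le_pow_left hL19 _
      _ = 19 ^ (3 * t) * t ^ (3 * t) := mul_pow _ _ _
  have h2 : t ^ (3 * t) ≤ 27 ^ t * (t !) ^ 3 := by
    have := pow_self_le_three_pow_mul_factorial t
    calc t ^ (3 * t) = (t ^ t) ^ 3 := by rw [← pow_mul, Nat.mul_comm]
      _ ≤ (3 ^ t * t !) ^ 3 := Nat.pow_le_pow_left this 3
      _ = (3 ^ t) ^ 3 * (t !) ^ 3 := mul_pow _ _ _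
      _ = 27 ^ t * (t !) ^ 3 := by
          rw [← pow_mul, Nat.mul_comm t 3, pow_mul]; norm_num
  have h3 : (t + 1) ^ 2 ≤ 4 ^ t := sq_succ_le_four_pow ht
  calc (t + 1) ^ 2 * 81 ^ t * L ^ (3 * t)
      ≤ 4 ^ t * 81 ^ t * (19 ^ (3 * t) * (27 ^ t * (t !) ^ 3)) := by
        exact Nat.mul_le_mul (Nat.mul_le_mul h3 le_rfl)
          (h1.trans (Nat.mul_le_mul le_rfl h2))
    _ = (4 * 81 * 19 ^ 3 * 27) ^ t * (t !) ^ 3 := by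
        simp only [pow_mul, mul_pow]; ring
    _ ≤ (64 * 8 ^ 7) ^ t * (t !) ^ 3 := by
        apply Nat.mul_le_mul_right
        apply Nat.pow_le_pow_left
        norm_num
    _ = 64 ^ t * 8 ^ (7 * t) * (t !) ^ 3 := by
        rw [mul_pow, ← pow_mul]
private lemma keyG (L n t : ℕ) (ht : 1 ≤ t) (h1 : 10 * t ≤ L) (h2 : L ≤ 10 * t + 9)
    (h3 : 9 * L ≤ n) :
    (t + 1) ^ 2 * L.choose t * (n.choose t) ^ 2 ≤ n.choose (L - t) := by
  have hL19 : L ≤ 19 * t := by omega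
  -- Step W2': pure L,t inequality
  have W2 : (t + 1) ^ 2 * 81 ^ t * (L ^ t * (L - t)!) ≤
      64 ^ t * 8 ^ (7 * t) * L ^ (L - 3 * t) * (t !) ^ 3 := by
    have hf : (L - t)! ≤ L ^ (L - t) :=
      (Nat.factorial_le_pow _).trans (Nat.pow_le_pow_left (by omega) _)
    have e : L ^ t * L ^ (L - t) = L ^ (L - 3 * t) * L ^ (3 * t) := by
      rw [← pow_add, ← pow_add]; congr 1; omega
    calc (t + 1) ^ 2 * 81 ^ t * (L ^ t * (L - t)!)
        ≤ (t + 1) ^ 2 * 81 ^ t * (L ^ t * L ^ (L - t)) := by gcongr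
      _ = L ^ (L - 3 * t) * ((t + 1) ^ 2 * 81 ^ t * L ^ (3 * t)) := by rw [e]; ring
      _ ≤ L ^ (L - 3 * t) * (64 ^ t * 8 ^ (7 * t) * (t !) ^ 3) := by
          exact Nat.mul_le_mul_left _ (W3 t ht L hL19)
      _ = 64 ^ t * 8 ^ (7 * t) * L ^ (L - 3 * t) * (t !) ^ 3 := by ring
  -- Step W
  have W : (t + 1) ^ 2 * (L ^ t * n ^ (2 * t) * (L - t)!) ≤ (n - L) ^ (L - t) * (t !) ^ 3 := by
    have p1 : 64 ^ t * n ^ (2 * t) ≤ 81 ^ t * (n - L) ^ (2 * t) := by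
      have h8 : 8 * n ≤ 9 * (n - L) := by omega
      have h64 : (64 : ℕ) ^ t = 8 ^ (2 * t) := by rw [Nat.pow_mul]
      have h81 : (81 : ℕ) ^ t = 9 ^ (2 * t) := by rw [Nat.pow_mul]
      calc 64 ^ t * n ^ (2 * t) = (8 * n) ^ (2 * t) := by rw [h64, mul_pow]
        _ ≤ (9 * (n - L)) ^ (2 * t) := Nat.pow_le_pow_left h8 _
        _ = 81 ^ t * (n - L) ^ (2 * t) := by rw [h81, mul_pow]
    have p2 : 8 ^ (7 * t) * L ^ (L - 3 * t) ≤ (n - L) ^ (L - 3 * t) := by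
      calc 8 ^ (7 * t) * L ^ (L - 3 * t) ≤ 8 ^ (L - 3 * t) * L ^ (L - 3 * t) := by
            gcongr <;> omega
        _ = (8 * L) ^ (L - 3 * t) := (mul_pow _ _ _).symm
        _ ≤ (n - L) ^ (L - 3 * t) := Nat.pow_le_pow_left (by omega) _
    have e2 : (n - L) ^ (2 * t) * (n - L) ^ (L - 3 * t) = (n - L) ^ (L - t) := by
      rw [← pow_add]; congr 1; omega
    refine Nat.le_of_mul_le_mul_left ?_ (show 0 < 64 ^ t by positivity)
    calc 64 ^ t * ((t + 1) ^ 2 * (L ^ t * n ^ (2 * t) * (L - t)!))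
        = (t + 1) ^ 2 * (L ^ t * (L - t)!) * (64 ^ t * n ^ (2 * t)) := by ring
      _ ≤ (t + 1) ^ 2 * (L ^ t * (L - t)!) * (81 ^ t * (n - L) ^ (2 * t)) := by gcongr
      _ = ((t + 1) ^ 2 * 81 ^ t * (L ^ t * (L - t)!)) * (n - L) ^ (2 * t) := by ring
      _ ≤ (64 ^ t * 8 ^ (7 * t) * L ^ (L - 3 * t) * (t !) ^ 3) * (n - L) ^ (2 * t) := by
          gcongr
      _ = (64 ^ t * (t !) ^ 3 * (n - L) ^ (2 * t)) * (8 ^ (7 * t) * L ^ (L - 3 * t)) := by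
          ring
      _ ≤ (64 ^ t * (t !) ^ 3 * (n - L) ^ (2 * t)) * (n - L) ^ (L - 3 * t) := by gcongr
      _ = 64 ^ t * ((n - L) ^ (L - t) * (t !) ^ 3) := by rw [← e2]; ring
  -- descFactorial facts
  have f1 : t ! * L.choose t ≤ L ^ t := by
    rw [← Nat.descFactorial_eq_factorial_mul_choose]; exact Nat.descFactorial_le_pow _ _
  have f2 : t ! * n.choose t ≤ n ^ t := by
    rw [← Nat.descFactorial_eq_factorial_mul_choose]; exact Nat.descFactorial_le_pow _ _
  have f3 : (n - L) ^ (L - t) ≤ (L - t)! * n.choose (L - t) := by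
    rw [← Nat.descFactorial_eq_factorial_mul_choose]
    calc (n - L) ^ (L - t) ≤ (n + 1 - (L - t)) ^ (L - t) :=
          Nat.pow_le_pow_left (by omega) _
      _ ≤ n.descFactorial (L - t) := Nat.pow_sub_le_descFactorial n _
  refine Nat.le_of_mul_le_mul_left ?_
    (show 0 < (t !) ^ 3 * (L - t)! by positivity)
  calc (t !) ^ 3 * (L - t)! * ((t + 1) ^ 2 * L.choose t * (n.choose t) ^ 2)
      = (t + 1) ^ 2 * ((t ! * L.choose t) * (t ! * n.choose t) ^ 2 * (L - t)!) := by ring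
    _ ≤ (t + 1) ^ 2 * (L ^ t * (n ^ t) ^ 2 * (L - t)!) := by gcongr
    _ = (t + 1) ^ 2 * (L ^ t * n ^ (2 * t) * (L - t)!) := by
        rw [← pow_mul, Nat.mul_comm t 2]
    _ ≤ (n - L) ^ (L - t) * (t !) ^ 3 := W
    _ ≤ ((L - t)! * n.choose (L - t)) * (t !) ^ 3 := by gcongr
    _ = (t !) ^ 3 * (L - t)! * n.choose (L - t) := by ring

private lemma choose_mono_left' {n k l : ℕ} (hkl : k ≤ l) (h : 2 * l ≤ n) :
    n.choose k ≤ n.choose l := by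
  induction hkl using Nat.decreasingInduction with
  | self => exact le_rfl
  | of_succ m hm ih =>
    refine (Nat.choose_le_succ_of_lt_half_left ?_).trans ih
    omega

private lemma key_count (L n t : ℕ) (ht : 1 ≤ t) (h1 : 10 * t ≤ L) (h2 : L ≤ 10 * t + 9)
    (h3 : 9 * L ≤ n) :
    (∑ j ∈ range (t + 1), L.choose j * n.choose j) ^ 2 ≤ (L + n).choose L := by
  have hBle : ∑ j ∈ range (t + 1), L.choose j * n.choose j
      ≤ (t + 1) * (L.choose t * n.choose t) := by
    calc ∑ j ∈ range (t + 1), L.choose j * n.choose j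
        ≤ ∑ _j ∈ range (t + 1), L.choose t * n.choose t := by
          refine Finset.sum_le_sum fun j hj => ?_
          have hjt : j ≤ t := by simpa [Nat.lt_succ_iff] using hj
          exact Nat.mul_le_mul (choose_mono_left' hjt (by omega))
            (choose_mono_left' hjt (by omega))
      _ = (t + 1) * (L.choose t * n.choose t) := by
          rw [Finset.sum_const, card_range, smul_eq_mul]
  have hV : L.choose t * n.choose (L - t) ≤ (L + n).choose L := by
    rw [Nat.add_choose_eq]
    have hmem : ((t, L - t) : ℕ × ℕ) ∈ Finset.HasAntidiagonal.antidiagonal L := by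
      rw [Finset.HasAntidiagonal.mem_antidiagonal]; omega
    exact Finset.single_le_sum (f := fun ij => L.choose ij.1 * n.choose ij.2)
      (fun i _ => Nat.zero_le _) hmem
  have hG := keyG L n t ht h1 h2 h3
  calc (∑ j ∈ range (t + 1), L.choose j * n.choose j) ^ 2
      ≤ ((t + 1) * (L.choose t * n.choose t)) ^ 2 := Nat.pow_le_pow_left hBle 2
    _ = L.choose t * ((t + 1) ^ 2 * L.choose t * (n.choose t) ^ 2) := by ring
    _ ≤ L.choose t * n.choose (L - t) := Nat.mul_le_mul_left _ hG
    _ ≤ (L + n).choose L := hV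

private lemma supp_inj {M : ℕ} {ω ω' : Fin M → Bool}
    (h : (univ.filter fun k => ω k = true) = (univ.filter fun k => ω' k = true)) :
    ω = ω' := by
  funext k
  have := Finset.ext_iff.mp h k
  simp only [Finset.mem_filter, Finset.mem_univ, true_and] at this
  cases hk : ω k <;> cases hk' : ω' k <;> simp_all

private lemma ham_eq {M : ℕ} (ω ω' : Fin M → Bool) :
    hammingDist ω ω' =
      ((univ.filter fun k => ω k = true) \ (univ.filter fun k => ω' k = true)).card +
      ((univ.filter fun k => ω' k = true) \ (univ.filter fun k => ω k = true)).card := by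
  rw [hammingDist]
  rw [← Finset.card_union_of_disjoint]
  · congr 1
    ext k
    simp only [Finset.mem_filter, Finset.mem_univ, true_and, Finset.mem_union,
      Finset.mem_sdiff]
    cases hk : ω k <;> cases hk' : ω' k <;> simp
  · rw [Finset.disjoint_left]
    intro x hx hx'
    simp only [Finset.mem_sdiff, Finset.mem_filter, Finset.mem_univ, true_and] at hx hx'
    tauto

private lemma ball_card_le (M L t : ℕ) (a : Fin M → Bool)
    (ha : (univ.filter fun k => a k = true).card = L) :
    (((univ : Finset (Fin M → Bool)).filter fun ω =>
        (univ.filter fun k => ω k = true).card = L).filter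
      fun ω => hammingDist a ω ≤ 2 * t + 1).card
      ≤ ∑ j ∈ range (t + 1), L.choose j * (M - L).choose j := by
  classical
  set s : Finset (Fin M) := univ.filter fun k => a k = true with hs
  set T : Finset (Finset (Fin M) × Finset (Fin M)) :=
    (range (t + 1)).biUnion fun j => powersetCard j s ×ˢ powersetCard j sᶜ with hT
  have hstep : (((univ : Finset (Fin M → Bool)).filter fun ω =>
        (univ.filter fun k => ω k = true).card = L).filter
      fun ω => hammingDist a ω ≤ 2 * t + 1).card ≤ T.card := by
    apply Finset.card_le_card_of_injOn
      (fun ω => (s \ (univ.filter fun k => ω k = true),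
        (univ.filter fun k => ω k = true) \ s))
    · intro ω hω
      simp only [Finset.mem_coe, Finset.mem_filter, Finset.mem_univ, true_and] at hω
      obtain ⟨hwL, hdist⟩ := hω
      set w : Finset (Fin M) := univ.filter fun k => ω k = true with hw
      have hcards : (s \ w).card = (w \ s).card :=
        Finset.card_sdiff_comm (by rw [ha, hwL])
      have hdeq : hammingDist a ω = (s \ w).card + (w \ s).card := ham_eq a ω
      have hle : (s \ w).card ≤ t := by omega
      rw [Finset.mem_coe, hT, Finset.mem_biUnion]
      refine ⟨(s \ w).card, ?_, ?_⟩
      · rw [Finset.mem_range]; omega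
      · rw [Finset.mem_product]
        constructor
        · rw [Finset.mem_powersetCard]
          exact ⟨Finset.sdiff_subset, rfl⟩
        · rw [Finset.mem_powersetCard]
          refine ⟨?_, hcards.symm⟩
          intro x hx
          rw [Finset.mem_compl]
          exact (Finset.mem_sdiff.mp hx).2
    · intro ω hω ω' hω' heq
      simp only [Prod.mk.injEq] at heq
      obtain ⟨h1, h2⟩ := heq
      apply supp_inj
      ext x
      by_cases hx : x ∈ s
      · have e1 := Finset.ext_iff.mp h1 x
        simp only [Finset.mem_sdiff, hx, true_and] at e1
        simp only [Finset.mem_filter, Finset.mem_univ, true_and] at e1 ⊢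
        tauto
      · have e2 := Finset.ext_iff.mp h2 x
        simp only [Finset.mem_sdiff, hx, and_true, not_false_iff] at e2
        simp only [Finset.mem_filter, Finset.mem_univ, true_and] at e2 ⊢
        tauto
  refine hstep.trans ?_
  refine (Finset.card_biUnion_le).trans ?_
  apply Finset.sum_le_sum
  intro j _
  rw [Finset.card_product, Finset.card_powersetCard, Finset.card_powersetCard]
  apply Nat.mul_le_mul
  · rw [hs, ha]
  · rw [Finset.card_compl]
    simp only [Fintype.card_fin]
    rw [hs, ha]

/-- Gilbert–Varshamov-type lemma for constant weight codes (Lemma 1): for `M ≥ 10` and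
`1 ≤ L ≤ M/10`, inside the set of binary strings of length `M` and Hamming weight `L`
there is a subset of cardinality at least `√(M choose L)` whose elements are pairwise at
Hamming distance at least `L/5`. -/
theorem constant_weight_code (M L : ℕ) (hM : 10 ≤ M) (hL1 : 1 ≤ L)
    (hLM : (L : ℝ) ≤ (M : ℝ) / 10) :
    ∃ A : Finset (Fin M → Bool),
      (∀ ω ∈ A, (Finset.univ.filter fun k => ω k = true).card = L) ∧
      Real.sqrt (Nat.choose M L) ≤ (A.card : ℝ) ∧
      ∀ ω ∈ A, ∀ ω' ∈ A, ω ≠ ω' → (L : ℝ) / 5 ≤ (hammingDist ω ω' : ℝ) := by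
  classical
  have h10L : 10 * L ≤ M := by
    have h : (10 : ℝ) * (L : ℝ) ≤ (M : ℝ) := by linarith
    exact_mod_cast h
  set S : Finset (Fin M → Bool) :=
    univ.filter (fun ω => (univ.filter fun k => ω k = true).card = L) with hS
  have hScard : S.card = M.choose L := by
    have hpc : (powersetCard L (univ : Finset (Fin M))).card = M.choose L := by
      rw [Finset.card_powersetCard, Finset.card_univ, Fintype.card_fin]
    rw [← hpc]
    apply Finset.card_nbij' (i := fun ω => univ.filter fun k => ω k = true)
      (j := fun (u : Finset (Fin M)) => fun k => decide (k ∈ u))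
    · intro ω hω
      rw [Finset.mem_coe, Finset.mem_powersetCard]
      exact ⟨Finset.subset_univ _, (Finset.mem_filter.mp (Finset.mem_coe.mp hω)).2⟩
    · intro u hu
      rw [Finset.mem_coe, Finset.mem_powersetCard] at hu
      rw [Finset.mem_coe, hS, Finset.mem_filter]
      refine ⟨Finset.mem_univ _, ?_⟩
      rw [show (univ.filter fun k => decide (k ∈ u) = true) = u by ext x; simp]
      exact hu.2
    · intro ω hω
      funext k
      simp only [Finset.mem_filter, Finset.mem_univ, true_and]
      cases h : ω k <;> simp [h]
    · intro u hu
      ext x; simp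
  have hdist2 : ∀ ω ∈ S, ∀ ω' ∈ S, ω ≠ ω' → 2 ≤ hammingDist ω ω' := by
    intro ω hω ω' hω' hne
    have hw := (Finset.mem_filter.mp hω).2
    have hw' := (Finset.mem_filter.mp hω').2
    have heq := ham_eq ω ω'
    have hcards : ((univ.filter fun k => ω k = true) \ (univ.filter fun k => ω' k = true)).card
        = ((univ.filter fun k => ω' k = true) \ (univ.filter fun k => ω k = true)).card :=
      Finset.card_sdiff_comm (by rw [hw, hw'])
    have hpos : 0 < hammingDist ω ω' := hammingDist_pos.mpr hne
    omega
  by_cases hL9 : L ≤ 9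
  · refine ⟨S, fun ω hω => (Finset.mem_filter.mp hω).2, ?_, ?_⟩
    · rw [hScard]
      have hC1 : 1 ≤ M.choose L := Nat.choose_pos (by omega)
      have hC1R : (1 : ℝ) ≤ (M.choose L : ℝ) := by exact_mod_cast hC1
      have h2 : Real.sqrt (M.choose L) ≤ Real.sqrt ((M.choose L : ℝ) * (M.choose L : ℝ)) :=
        Real.sqrt_le_sqrt (by nlinarith)
      rwa [Real.sqrt_mul_self (by positivity)] at h2
    · intro ω hω ω' hω' hne
      have h2 := hdist2 ω hω ω' hω' hne
      have h2R : (2 : ℝ) ≤ (hammingDist ω ω' : ℝ) := by exact_mod_cast h2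
      have hLR : (L : ℝ) ≤ 9 := by exact_mod_cast hL9
      linarith
  · push_neg at hL9
    have hL10 : 10 ≤ L := hL9
    set t : ℕ := L / 10 with ht
    have ht1 : 1 ≤ t := by omega
    have h10t : 10 * t ≤ L := by omega
    have hLt : L ≤ 10 * t + 9 := by omega
    set n : ℕ := M - L with hn
    have h9L : 9 * L ≤ n := by omega
    set Bn : ℕ := ∑ j ∈ range (t + 1), L.choose j * n.choose j with hBn
    have hB2 : Bn ^ 2 ≤ M.choose L := by
      have hkc := key_count L n t ht1 h10t hLt h9L
      rwa [show L + n = M by omega] at hkc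
    have hB1 : 1 ≤ Bn := by
      have h0 : L.choose 0 * n.choose 0 ≤ Bn :=
        Finset.single_le_sum (f := fun j => L.choose j * n.choose j)
          (fun i _ => Nat.zero_le _) (Finset.mem_range.mpr (by omega))
      simpa using h0
    set 𝒜 : Finset (Finset (Fin M → Bool)) := S.powerset.filter
      (fun A => ∀ ω ∈ A, ∀ ω' ∈ A, ω ≠ ω' → L ≤ 5 * hammingDist ω ω') with h𝒜
    have hempty : (∅ : Finset (Fin M → Bool)) ∈ 𝒜 := by
      rw [h𝒜, Finset.mem_filter]
      exact ⟨Finset.empty_mem_powerset _, fun ω hω => by simp at hω⟩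
    obtain ⟨A, hA𝒜, hAmax⟩ := Finset.exists_max_image 𝒜 Finset.card ⟨∅, hempty⟩
    rw [h𝒜, Finset.mem_filter] at hA𝒜
    have hAS : A ⊆ S := Finset.mem_powerset.mp hA𝒜.1
    have hAgood := hA𝒜.2
    have hcover : ∀ ω ∈ S, ∃ a ∈ A, hammingDist a ω ≤ 2 * t + 1 := by
      intro ω hω
      by_contra hcon
      push_neg at hcon
      have hωA : ω ∉ A := by
        intro h
        have h' := hcon ω h
        rw [hammingDist_self] at h'
        omega
      have hins : insert ω A ∈ 𝒜 := by
        rw [h𝒜, Finset.mem_filter]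
        constructor
        · rw [Finset.mem_powerset]
          intro x hx
          rcases Finset.mem_insert.mp hx with h | h
          · subst h; exact hω
          · exact hAS h
        · intro x hx y hy hxy
          rcases Finset.mem_insert.mp hx with hx' | hx' <;>
            rcases Finset.mem_insert.mp hy with hy' | hy'
          · subst hx'; subst hy'; exact absurd rfl hxy
          · subst hx'
            have h' := hcon y hy'
            rw [hammingDist_comm] at h'
            omega
          · subst hy'
            have h' := hcon x hx'
            omega
          · exact hAgood x hx' y hy' hxy
      have hle := hAmax _ hins
      rw [Finset.card_insert_of_notMem hωA] at hle
      omega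
    have hcount : M.choose L ≤ A.card * Bn := by
      rw [← hScard]
      have hsub : S ⊆ A.biUnion fun a => S.filter fun ω => hammingDist a ω ≤ 2 * t + 1 := by
        intro ω hω
        obtain ⟨a, haA, hd⟩ := hcover ω hω
        exact Finset.mem_biUnion.mpr ⟨a, haA, Finset.mem_filter.mpr ⟨hω, hd⟩⟩
      calc S.card ≤ (A.biUnion fun a => S.filter fun ω => hammingDist a ω ≤ 2 * t + 1).card :=
            Finset.card_le_card hsub
        _ ≤ ∑ a ∈ A, (S.filter fun ω => hammingDist a ω ≤ 2 * t + 1).card :=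
            Finset.card_biUnion_le
        _ ≤ ∑ _a ∈ A, Bn := by
            refine Finset.sum_le_sum fun a ha => ?_
            have haw := (Finset.mem_filter.mp (hAS ha)).2
            have hball := ball_card_le M L t a haw
            rw [hBn, hn]
            exact hball
        _ = A.card * Bn := by rw [Finset.sum_const, smul_eq_mul]
    refine ⟨A, fun ω hω => (Finset.mem_filter.mp (hAS hω)).2, ?_, ?_⟩
    · have hBleR : (Bn : ℝ) ≤ Real.sqrt (M.choose L) := by
        apply Real.le_sqrt_of_sq_le
        exact_mod_cast hB2
      have hCleR : (M.choose L : ℝ) ≤ (A.card : ℝ) * (Bn : ℝ) := by exact_mod_cast hcount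
      have hCpos : 0 < M.choose L := by
        have hb : 0 < Bn ^ 2 := by positivity
        omega
      have hsq : Real.sqrt (M.choose L) * Real.sqrt (M.choose L) = (M.choose L : ℝ) :=
        Real.mul_self_sqrt (by positivity)
      have hsqpos : 0 < Real.sqrt (M.choose L) := by
        apply Real.sqrt_pos.mpr
        exact_mod_cast hCpos
      have hBpos : (0 : ℝ) < (Bn : ℝ) := by exact_mod_cast hB1
      nlinarith [mul_le_mul_of_nonneg_left hBleR (show (0:ℝ) ≤ (A.card : ℝ) by positivity)]
    · intro ω hω ω' hω' hne
      have h5 := hAgood ω hω ω' hω' hne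
      rw [div_le_iff₀ (by norm_num : (0:ℝ) < 5)]
      have hc : (L : ℝ) ≤ 5 * (hammingDist ω ω' : ℝ) := by exact_mod_cast h5
      linarith
end

section
/- For every real v > 0 and every real z with |z| ≤ v, sin z = z + (v²/2) ∫₀¹ sin(v t) [clip(−2z/v − 2t − 1) − clip(2z/v − 2t − 1)] dt, where clip(z) = sgn(z)·min{1, |z|} and sgn(z) = 1 if z > 0 and −1 otherwise. -/
open MeasureTheory

noncomputable section

/-- The signum function: `sgn z = 1` if `z > 0` and `−1` otherwise. -/
def sgn (z : ℝ) : ℝ := if 0 < z then 1 else -1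

/-- The clipped linear activation `clip z = sgn(z) · min {1, |z|}`. -/
def clip (z : ℝ) : ℝ := sgn z * min 1 |z|

lemma clip_eq (w : ℝ) : clip w = max (-1) (min 1 w) := by
  unfold clip sgn
  split_ifs with h
  · rw [abs_of_pos h, one_mul, max_eq_right]
    exact le_trans (by norm_num) (le_min (by norm_num) h.le)
  · push_neg at h
    rw [min_eq_right (le_trans h (by norm_num : (0:ℝ) ≤ 1)), abs_of_nonpos h,
      show min (1:ℝ) (-w) = -(max (-1) w) by rw [← min_neg_neg]; norm_num]
    ring

open MeasureTheory in
lemma aux (v : ℝ) (hv : 0 < v) (z : ℝ) (hz0 : 0 ≤ z) (hz : z ≤ v) :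
    Real.sin z =
      z + (v ^ 2 / 2) * ∫ t in Set.Icc (0 : ℝ) 1,
        Real.sin (v * t) * (clip (-2 * z / v - 2 * t - 1) - clip (2 * z / v - 2 * t - 1)) := by
  set c := z / v with hc
  have hvne : v ≠ 0 := hv.ne'
  have hc0 : 0 ≤ c := div_nonneg hz0 hv.le
  have hc1 : c ≤ 1 := (div_le_one hv).2 hz
  have hvc : v * c = z := by rw [hc]; field_simp
  -- pointwise identity on [0,1]
  have key : Set.EqOn
      (fun t => Real.sin (v * t) * (clip (-2 * z / v - 2 * t - 1) - clip (2 * z / v - 2 * t - 1)))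
      (fun t => Real.sin (v * t) * (-2 * max (c - t) 0)) (Set.Icc (0:ℝ) 1) := by
    intro t ht
    obtain ⟨ht0, ht1⟩ := ht
    have e1 : -2 * z / v - 2 * t - 1 = -2 * c - 2 * t - 1 := by rw [hc]; ring
    have e2 : 2 * z / v - 2 * t - 1 = 2 * c - 2 * t - 1 := by rw [hc]; ring
    simp only [e1, e2, clip_eq]
    have h1 : -2 * c - 2 * t - 1 ≤ -1 := by nlinarith
    have h2 : 2 * c - 2 * t - 1 ≤ 1 := by nlinarith
    rw [min_eq_right (by linarith : -2 * c - 2 * t - 1 ≤ 1), max_eq_left h1,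
      min_eq_right h2]
    rcases le_total (c - t) 0 with h | h
    · rw [max_eq_right h, max_eq_left (by linarith : 2 * c - 2 * t - 1 ≤ -1)]; ring
    · rw [max_eq_left h, max_eq_right (by linarith : (-1:ℝ) ≤ 2 * c - 2 * t - 1)]; ring
  rw [setIntegral_congr_fun measurableSet_Icc key]
  have hcont : Continuous (fun t => Real.sin (v * t) * (-2 * max (c - t) 0)) := by
    fun_prop
  have hIcc : (∫ t in Set.Icc (0:ℝ) 1, Real.sin (v * t) * (-2 * max (c - t) 0))
      = ∫ t in (0:ℝ)..1, Real.sin (v * t) * (-2 * max (c - t) 0) := by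
    rw [intervalIntegral.integral_of_le zero_le_one, integral_Icc_eq_integral_Ioc]
  rw [hIcc]
  have hsplit : (∫ t in (0:ℝ)..c, Real.sin (v * t) * (-2 * max (c - t) 0))
      + (∫ t in c..(1:ℝ), Real.sin (v * t) * (-2 * max (c - t) 0))
      = ∫ t in (0:ℝ)..1, Real.sin (v * t) * (-2 * max (c - t) 0) :=
    intervalIntegral.integral_add_adjacent_intervals
      (hcont.intervalIntegrable _ _) (hcont.intervalIntegrable _ _)
  rw [← hsplit]
  have hright : (∫ t in c..(1:ℝ), Real.sin (v * t) * (-2 * max (c - t) 0)) = 0 := by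
    rw [intervalIntegral.integral_congr (g := fun _ => (0:ℝ))]
    · simp
    · intro t ht
      rw [Set.uIcc_of_le hc1] at ht
      have : c - t ≤ 0 := by linarith [ht.1]
      simp [max_eq_right this]
  have hleft : (∫ t in (0:ℝ)..c, Real.sin (v * t) * (-2 * max (c - t) 0))
      = ∫ t in (0:ℝ)..c, Real.sin (v * t) * (-2 * (c - t)) := by
    apply intervalIntegral.integral_congr
    intro t ht
    rw [Set.uIcc_of_le hc0] at ht
    have : 0 ≤ c - t := by linarith [ht.2]
    simp [max_eq_left this]
  have hftc : (∫ t in (0:ℝ)..c, Real.sin (v * t) * (-2 * (c - t)))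
      = 2 * Real.sin (v * c) / v ^ 2 - 2 * c / v := by
    have hderiv : ∀ t ∈ Set.uIcc (0:ℝ) c, HasDerivAt
        (fun t => 2 * (c - t) * Real.cos (v * t) / v + 2 * Real.sin (v * t) / v ^ 2)
        (Real.sin (v * t) * (-2 * (c - t))) t := by
      intro t _
      have hid : HasDerivAt (fun t : ℝ => v * t) v t := by
        simpa using (hasDerivAt_id t).const_mul v
      have hcos : HasDerivAt (fun t => Real.cos (v * t)) (-Real.sin (v * t) * v) t :=
        (Real.hasDerivAt_cos (v * t)).comp t hid
      have hsin : HasDerivAt (fun t => Real.sin (v * t)) (Real.cos (v * t) * v) t :=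
        (Real.hasDerivAt_sin (v * t)).comp t hid
      have hlin : HasDerivAt (fun t : ℝ => 2 * (c - t)) (-2) t := by
        simpa using ((hasDerivAt_id t).const_sub c).const_mul 2
      have := ((hlin.mul hcos).div_const v).add ((hsin.const_mul 2).div_const (v ^ 2))
      refine this.congr_deriv ?_
      rw [div_add_div _ _ hvne (pow_ne_zero 2 hvne), div_eq_iff (mul_ne_zero hvne (pow_ne_zero 2 hvne))]
      ring
    rw [intervalIntegral.integral_eq_sub_of_hasDerivAt hderiv
      (Continuous.intervalIntegrable (by fun_prop) _ _)]
    simp only [Real.sin_zero, Real.cos_zero, mul_zero, sub_self, sub_zero, zero_div]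
    ring
  rw [hright, hleft, hftc, add_zero, hvc]
  simp only [hc]
  field_simp
  ring

/-- The sine function as a linear part plus an integral combination of clipped-linear
ridge functions: for `|z| ≤ v`,
`sin z = z + (v²/2)∫₀¹ sin(vt)[clip(−2z/v − 2t − 1) − clip(2z/v − 2t − 1)] dt`. -/
theorem sin_eq_integral_clip (v : ℝ) (hv : 0 < v) (z : ℝ) (hz : |z| ≤ v) :
    Real.sin z =
      z + (v ^ 2 / 2) * ∫ t in Set.Icc (0 : ℝ) 1,
        Real.sin (v * t) * (clip (-2 * z / v - 2 * t - 1) - clip (2 * z / v - 2 * t - 1)) := by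
  rcases le_or_gt 0 z with h0 | h0
  · exact aux v hv z h0 (by rwa [abs_of_nonneg h0] at hz)
  · have h1 : 0 ≤ -z := by linarith
    have h2 : -z ≤ v := by rwa [abs_of_neg h0] at hz
    have H := aux v hv (-z) h1 h2
    have hI : (∫ t in Set.Icc (0:ℝ) 1,
          Real.sin (v * t) * (clip (-2 * -z / v - 2 * t - 1) - clip (2 * -z / v - 2 * t - 1)))
        = - ∫ t in Set.Icc (0:ℝ) 1,
          Real.sin (v * t) * (clip (-2 * z / v - 2 * t - 1) - clip (2 * z / v - 2 * t - 1)) := by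
      rw [← integral_neg]
      apply setIntegral_congr_fun measurableSet_Icc
      intro t _
      have e1 : -2 * -z / v - 2 * t - 1 = 2 * z / v - 2 * t - 1 := by ring
      have e2 : 2 * -z / v - 2 * t - 1 = -2 * z / v - 2 * t - 1 := by ring
      simp only []
      rw [e1, e2]
      ring
    rw [hI, Real.sin_neg] at H
    linarith

end
end

section
/- Let d, M, L, ℓ be positive integers, v1 > 0, and let θ_1, …, θ_M be unit vectors in ℝ^d (‖θ_k‖₂ = 1) such that |θ_i·θ_j| ≤ 9/10 for all i ≠ j. For ω ∈ {0,1}^M define f_ω(x) = (v1/L) Σ_{k=1}^M ω_k φℓ(θ_k·x) where φℓ = Hℓ/√(ℓ!) is the standardized probabilists' Hermite polynomial. Let X ~ N(0, I_d) and let ω, ω' ∈ {0,1}^M each have Hamming weight L with Hamming distance at least L/5. If ℓ > log(4L)/log(10/9), then E[(f_ω(X) − f_{ω'}(X))²] ≥ v1²/(10L). -/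
open MeasureTheory ProbabilityTheory Real Finset

noncomputable section

/-- The probabilists' Hermite polynomial `Hℓ(z) = (−1)^ℓ e^{z²/2} (d^ℓ/dz^ℓ) e^{−z²/2}`. -/
def hermiteH (ℓ : ℕ) (z : ℝ) : ℝ :=
  (-1 : ℝ) ^ ℓ * Real.exp (z ^ 2 / 2) * iteratedDeriv ℓ (fun t => Real.exp (-t ^ 2 / 2)) z

/-- The standardized Hermite polynomial `φℓ = Hℓ/√(ℓ!)`. -/
def stdHermite (ℓ : ℕ) (z : ℝ) : ℝ := hermiteH ℓ z / Real.sqrt (Nat.factorial ℓ)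

/-- The standard Gaussian distribution `N(0, I_d)` on `ℝ^d`. -/
def stdGaussian (d : ℕ) : Measure (Fin d → ℝ) :=
  Measure.pi fun _ => gaussianReal 0 1

section Aux
open Polynomial Filter

/-- Real Hermite polynomial. -/
def Hpoly (n : ℕ) : ℝ[X] := (Polynomial.hermite n).map (Int.castRingHom ℝ)

lemma Hpoly_zero : Hpoly 0 = 1 := by simp [Hpoly]

lemma Hpoly_succ (n : ℕ) : Hpoly (n + 1) = X * Hpoly n - derivative (Hpoly n) := by
  simp [Hpoly, hermite_succ, Polynomial.map_mul, Polynomial.map_sub, derivative_map]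

lemma derivative_Hpoly (n : ℕ) :
    derivative (Hpoly (n + 1)) = C ((n : ℝ) + 1) * Hpoly n := by
  induction n with
  | zero =>
    simp [Hpoly_succ, Hpoly_zero]
  | succ n ih =>
    rw [Hpoly_succ (n+1), derivative_sub, derivative_mul, derivative_X, one_mul, ih,
      derivative_mul, derivative_C, zero_mul, zero_add, Hpoly_succ n]
    have h2 : (((n + 1 : ℕ) : ℝ) + 1) = ((n : ℝ) + 1) + 1 := by push_cast; ring
    simp only [h2, C_add, C_1]
    ring

lemma aeval_hermite_eq_Hpoly (n : ℕ) (x : ℝ) :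
    (Polynomial.aeval x) (Polynomial.hermite n) = (Hpoly n).eval x := by
  rw [Hpoly, aeval_def, ← algebraMap_int_eq, eval_map]

/-- `hermiteH` agrees with the polynomial `Hpoly`. -/
lemma hermiteH_eq (n : ℕ) (z : ℝ) : hermiteH n z = (Hpoly n).eval z := by
  have h1 : (fun t : ℝ => Real.exp (-t ^ 2 / 2)) = fun t : ℝ => Real.exp (-(t ^ 2 / 2)) := by
    funext t; rw [neg_div]
  rw [hermiteH, h1, iteratedDeriv_eq_iterate,
    Polynomial.deriv_gaussian_eq_hermite_mul_gaussian, aeval_hermite_eq_Hpoly]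
  rw [Real.exp_neg]
  have h2 : ((-1 : ℝ)) ^ n * ((-1 : ℝ)) ^ n = 1 := by
    rw [← pow_add]; exact Even.neg_one_pow ⟨n, rfl⟩
  field_simp
  linear_combination (Polynomial.eval z (Hpoly n)) * h2

lemma stdHermite_eq (n : ℕ) (z : ℝ) :
    stdHermite n z = (Hpoly n).eval z / Real.sqrt (Nat.factorial n) := by
  rw [stdHermite, hermiteH_eq]


/-! ### 1D Gaussian integrals -/

lemma integrable_pow_gauss (k : ℕ) :
    Integrable (fun x : ℝ => x ^ k * Real.exp (-(x ^ 2 / 2))) := by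
  have h := integrable_rpow_mul_exp_neg_mul_sq (b := 1/2) (by norm_num) (s := k)
    (lt_of_lt_of_le neg_one_lt_zero (Nat.cast_nonneg k))
  have heq : (fun x : ℝ => x ^ k * Real.exp (-(x ^ 2 / 2))) =
      fun x : ℝ => x ^ (k : ℝ) * Real.exp (-(1/2) * x ^ 2) := by
    funext x
    rw [Real.rpow_natCast, show -(x ^ 2 / 2) = -(1/2) * x ^ 2 from by ring]
  rw [heq]
  exact h

lemma integrable_eval_gauss (P : ℝ[X]) :
    Integrable (fun x : ℝ => P.eval x * Real.exp (-(x ^ 2 / 2))) := by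
  have : (fun x : ℝ => P.eval x * Real.exp (-(x ^ 2 / 2))) =
      fun x => ∑ i ∈ Finset.range (P.natDegree + 1),
        P.coeff i * (x ^ i * Real.exp (-(x ^ 2 / 2))) := by
    funext x
    rw [Polynomial.eval_eq_sum_range, Finset.sum_mul]
    simp [mul_assoc]
  rw [this]
  exact integrable_finset_sum _ fun i _ => (integrable_pow_gauss i).const_mul _

lemma tendsto_pow_gauss_atTop (k : ℕ) :
    Tendsto (fun x : ℝ => x ^ k * Real.exp (-(x ^ 2 / 2))) atTop (nhds 0) := by
  have h1 : Tendsto (fun x : ℝ => x ^ k * Real.exp (-x)) atTop (nhds 0) :=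
    tendsto_pow_mul_exp_neg_atTop_nhds_zero k
  refine squeeze_zero' ?_ ?_ h1
  · filter_upwards [eventually_ge_atTop (0:ℝ)] with x hx
    positivity
  · filter_upwards [eventually_ge_atTop (2:ℝ)] with x hx
    have h2 : -(x ^ 2 / 2) ≤ -x := by nlinarith
    have := Real.exp_le_exp.2 h2
    have hx0 : (0:ℝ) ≤ x ^ k := by positivity
    calc x ^ k * Real.exp (-(x ^ 2 / 2)) ≤ x ^ k * Real.exp (-x) := by
          exact mul_le_mul_of_nonneg_left this hx0
    _ = x ^ k * Real.exp (-x) := rfl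

lemma tendsto_pow_gauss_atBot (k : ℕ) :
    Tendsto (fun x : ℝ => x ^ k * Real.exp (-(x ^ 2 / 2))) atBot (nhds 0) := by
  have h1 : Tendsto (fun x : ℝ => (-1 : ℝ) ^ k * (x ^ k * Real.exp (-(x ^ 2 / 2))))
      atTop (nhds 0) := by
    simpa using (tendsto_pow_gauss_atTop k).const_mul ((-1 : ℝ) ^ k)
  refine (h1.comp tendsto_neg_atBot_atTop).congr fun x => ?_
  show (-1 : ℝ) ^ k * ((-x) ^ k * Real.exp (-((-x) ^ 2 / 2))) = x ^ k * Real.exp (-(x ^ 2 / 2))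
  have hk : ((-1 : ℝ)) ^ k * ((-1 : ℝ)) ^ k = 1 := by
    rw [← pow_add]; exact Even.neg_one_pow ⟨k, rfl⟩
  rw [neg_sq, neg_pow]
  linear_combination (x ^ k * Real.exp (-(x ^ 2 / 2))) * hk

lemma tendsto_eval_gauss_atTop (P : ℝ[X]) :
    Tendsto (fun x : ℝ => P.eval x * Real.exp (-(x ^ 2 / 2))) atTop (nhds 0) := by
  have : (fun x : ℝ => P.eval x * Real.exp (-(x ^ 2 / 2))) =
      fun x => ∑ i ∈ Finset.range (P.natDegree + 1),
        P.coeff i * (x ^ i * Real.exp (-(x ^ 2 / 2))) := by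
    funext x
    rw [Polynomial.eval_eq_sum_range, Finset.sum_mul]
    simp [mul_assoc]
  rw [this]
  have := tendsto_finset_sum (Finset.range (P.natDegree + 1))
    (fun i _ => ((tendsto_pow_gauss_atTop i).const_mul (P.coeff i)))
  simpa using this

lemma tendsto_eval_gauss_atBot (P : ℝ[X]) :
    Tendsto (fun x : ℝ => P.eval x * Real.exp (-(x ^ 2 / 2))) atBot (nhds 0) := by
  have : (fun x : ℝ => P.eval x * Real.exp (-(x ^ 2 / 2))) =
      fun x => ∑ i ∈ Finset.range (P.natDegree + 1),
        P.coeff i * (x ^ i * Real.exp (-(x ^ 2 / 2))) := by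
    funext x
    rw [Polynomial.eval_eq_sum_range, Finset.sum_mul]
    simp [mul_assoc]
  rw [this]
  have := tendsto_finset_sum (Finset.range (P.natDegree + 1))
    (fun i _ => ((tendsto_pow_gauss_atBot i).const_mul (P.coeff i)))
  simpa using this

lemma hasDerivAt_eval_gauss (P : ℝ[X]) (x : ℝ) :
    HasDerivAt (fun x : ℝ => P.eval x * Real.exp (-(x ^ 2 / 2)))
      ((Polynomial.derivative P - Polynomial.X * P).eval x * Real.exp (-(x ^ 2 / 2))) x := by
  have hexp : HasDerivAt (fun x : ℝ => Real.exp (-(x ^ 2 / 2)))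
      (-x * Real.exp (-(x ^ 2 / 2))) x := by
    have h1 : HasDerivAt (fun x : ℝ => -(x ^ 2 / 2)) (-x) x := by
      have := ((hasDerivAt_pow 2 x).div_const 2).neg
      simp at this; exact this
    simpa [mul_comm] using h1.exp
  have : HasDerivAt (fun x : ℝ => P.eval x * Real.exp (-(x ^ 2 / 2))) _ x := (P.hasDerivAt x).mul hexp
  convert this using 1
  simp [Polynomial.eval_sub, Polynomial.eval_mul]
  ring

lemma integral_deriv_gauss_zero (P : ℝ[X]) :
    ∫ x : ℝ, (Polynomial.derivative P - Polynomial.X * P).eval x * Real.exp (-(x ^ 2 / 2)) = 0 := by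
  set F := fun x : ℝ => P.eval x * Real.exp (-(x ^ 2 / 2)) with hF
  set F' := fun x : ℝ =>
    (Polynomial.derivative P - Polynomial.X * P).eval x * Real.exp (-(x ^ 2 / 2)) with hF'
  have hderiv : ∀ x : ℝ, HasDerivAt F (F' x) x := fun x => hasDerivAt_eval_gauss P x
  have hint : Integrable F' := integrable_eval_gauss _
  have hIoi : ∫ x in Set.Ioi (0:ℝ), F' x = 0 - F 0 :=
    MeasureTheory.integral_Ioi_of_hasDerivAt_of_tendsto
      (hderiv 0).continuousAt.continuousWithinAt (fun x _ => hderiv x)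
      hint.integrableOn (tendsto_eval_gauss_atTop P)
  have hIic : ∫ x in Set.Iic (0:ℝ), F' x = F 0 - 0 :=
    MeasureTheory.integral_Iic_of_hasDerivAt_of_tendsto
      (hderiv 0).continuousAt.continuousWithinAt (fun x _ => hderiv x)
      hint.integrableOn (tendsto_eval_gauss_atBot P)
  have htot := intervalIntegral.integral_Iic_add_Ioi (b := (0:ℝ)) (μ := volume)
    hint.integrableOn hint.integrableOn
  rw [hIic, hIoi] at htot
  rw [← htot]
  ring


lemma gaussianPDFReal_zero_one (x : ℝ) :
    ProbabilityTheory.gaussianPDFReal 0 1 x =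
      (Real.sqrt (2 * π))⁻¹ * Real.exp (-(x ^ 2 / 2)) := by
  simp only [ProbabilityTheory.gaussianPDFReal, NNReal.coe_one, mul_one, sub_zero]
  rw [show -x ^ 2 / (2:ℝ) = -(x ^ 2 / 2) from by ring]

lemma integral_gaussianReal (f : ℝ → ℝ) :
    ∫ x, f x ∂(gaussianReal 0 1) =
      (Real.sqrt (2 * π))⁻¹ * ∫ x, f x * Real.exp (-(x ^ 2 / 2)) := by
  rw [ProbabilityTheory.gaussianReal_of_var_ne_zero 0 one_ne_zero]
  have hmeas : Measurable fun x => (ProbabilityTheory.gaussianPDFReal 0 1 x).toNNReal :=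
    (ProbabilityTheory.measurable_gaussianPDFReal 0 1).real_toNNReal
  have h1 : (ProbabilityTheory.gaussianPDF 0 1) =
      fun x => ((ProbabilityTheory.gaussianPDFReal 0 1 x).toNNReal : ENNReal) := rfl
  rw [h1, integral_withDensity_eq_integral_smul hmeas f]
  have h2 : ∀ x : ℝ, (ProbabilityTheory.gaussianPDFReal 0 1 x).toNNReal • f x
      = f x * Real.exp (-(x ^ 2 / 2)) * (Real.sqrt (2 * π))⁻¹ := by
    intro x
    rw [NNReal.smul_def, Real.coe_toNNReal _ (ProbabilityTheory.gaussianPDFReal_nonneg 0 1 x),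
      gaussianPDFReal_zero_one, smul_eq_mul]
    ring
  simp_rw [h2]
  rw [MeasureTheory.integral_mul_const]
  ring

lemma integrable_gaussianReal_iff {f : ℝ → ℝ} :
    Integrable f (gaussianReal 0 1) ↔
      Integrable (fun x => f x * ProbabilityTheory.gaussianPDFReal 0 1 x) volume := by
  rw [ProbabilityTheory.gaussianReal_of_var_ne_zero 0 one_ne_zero]
  rw [MeasureTheory.integrable_withDensity_iff (ProbabilityTheory.measurable_gaussianPDF 0 1)
    (Filter.Eventually.of_forall fun x => ENNReal.ofReal_lt_top)]
  constructor <;> intro h <;> refine h.congr (Filter.Eventually.of_forall fun x => ?_) <;>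
    simp [ProbabilityTheory.gaussianPDF_def,
      ENNReal.toReal_ofReal (ProbabilityTheory.gaussianPDFReal_nonneg 0 1 x)]

lemma integrable_eval_gaussianReal (P : ℝ[X]) :
    Integrable (fun x => P.eval x) (gaussianReal 0 1) := by
  rw [integrable_gaussianReal_iff]
  have : (fun x => P.eval x * ProbabilityTheory.gaussianPDFReal 0 1 x) =
      fun x => (Real.sqrt (2 * π))⁻¹ * (P.eval x * Real.exp (-(x ^ 2 / 2))) := by
    funext x; rw [gaussianPDFReal_zero_one]; ring
  rw [this]
  exact (integrable_eval_gauss P).const_mul _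

lemma key1D (P : ℝ[X]) :
    ∫ x, x * P.eval x ∂(gaussianReal 0 1) =
      ∫ x, (Polynomial.derivative P).eval x ∂(gaussianReal 0 1) := by
  have e1 : (fun x : ℝ => x * P.eval x) = fun x => (Polynomial.X * P).eval x := by
    funext x; simp
  have e2 : ∀ x : ℝ,
      ((Polynomial.derivative P - Polynomial.X * P).eval x) * Real.exp (-(x ^ 2 / 2)) =
      (Polynomial.derivative P).eval x * Real.exp (-(x ^ 2 / 2)) -
        ((Polynomial.X * P).eval x) * Real.exp (-(x ^ 2 / 2)) := by
    intro x; rw [Polynomial.eval_sub]; ring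
  have h0 := integral_deriv_gauss_zero P
  simp_rw [e2] at h0
  rw [MeasureTheory.integral_sub (integrable_eval_gauss _) (integrable_eval_gauss _)] at h0
  rw [sub_eq_zero] at h0
  rw [integral_gaussianReal, integral_gaussianReal]
  simp_rw [show ∀ x : ℝ, x * P.eval x = (Polynomial.X * P).eval x from fun x => by simp]
  rw [← h0]


/-! ### Multivariate integrability -/

instance stdGaussian_prob (d : ℕ) : IsProbabilityMeasure (stdGaussian d) := by
  unfold _root_.stdGaussian; infer_instance

lemma poly_abs_bound (P : ℝ[X]) (z : ℝ) :
    |P.eval z| ≤ (∑ i ∈ Finset.range (P.natDegree + 1), |P.coeff i|) *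
      (1 + z ^ 2) ^ P.natDegree := by
  rw [Polynomial.eval_eq_sum_range]
  refine (Finset.abs_sum_le_sum_abs _ _).trans ?_
  rw [Finset.sum_mul]
  refine Finset.sum_le_sum fun i hi => ?_
  rw [abs_mul, abs_pow]
  have h1 : |z| ≤ 1 + z ^ 2 := by nlinarith [abs_nonneg z, sq_abs z]
  have h2 : |z| ^ i ≤ (1 + z ^ 2) ^ i := pow_le_pow_left₀ (abs_nonneg z) h1 i
  have h3 : (1 + z ^ 2) ^ i ≤ (1 + z ^ 2) ^ P.natDegree := by
    apply pow_le_pow_right₀ (by nlinarith) (Nat.lt_succ_iff.1 (Finset.mem_range.1 hi))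
  exact mul_le_mul_of_nonneg_left (h2.trans h3) (abs_nonneg _)

lemma sum_le_prod_one_add {ι : Type*} (s : Finset ι) (u : ι → ℝ) (hu : ∀ j, 0 ≤ u j) :
    ∑ j ∈ s, u j ≤ ∏ j ∈ s, (1 + u j) := by
  induction s using Finset.cons_induction with
  | empty => simp
  | cons j s hj ih =>
    rw [Finset.sum_cons, Finset.prod_cons]
    have h1 : (1 : ℝ) ≤ ∏ k ∈ s, (1 + u k) := by
      calc (1:ℝ) = ∏ k ∈ s, 1 := by simp
      _ ≤ ∏ k ∈ s, (1 + u k) :=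
        Finset.prod_le_prod (fun k _ => zero_le_one) (fun k _ => by linarith [hu k])
    nlinarith [hu j]

lemma one_le_prod_one_add {d : ℕ} (x : Fin d → ℝ) :
    (1 : ℝ) ≤ ∏ j, (1 + (x j) ^ 2) := by
  calc (1:ℝ) = ∏ _j : Fin d, 1 := by simp
  _ ≤ ∏ j, (1 + (x j) ^ 2) :=
    Finset.prod_le_prod (fun k _ => zero_le_one) (fun k _ => by nlinarith [sq_nonneg (x k)])

lemma one_add_dot_sq_le {d : ℕ} (a x : Fin d → ℝ) :
    1 + (∑ j, a j * x j) ^ 2 ≤ (1 + ∑ j, (a j) ^ 2) * ∏ j, (1 + (x j) ^ 2) := by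
  have h1 : (∑ j, a j * x j) ^ 2 ≤ (∑ j, (a j) ^ 2) * ∑ j, (x j) ^ 2 :=
    Finset.sum_mul_sq_le_sq_mul_sq _ _ _
  have h2 : ∑ j, (x j) ^ 2 ≤ ∏ j, (1 + (x j) ^ 2) :=
    sum_le_prod_one_add _ _ fun j => sq_nonneg _
  have h3 := one_le_prod_one_add x
  have h4 : (0 : ℝ) ≤ ∑ j, (a j) ^ 2 := Finset.sum_nonneg fun j _ => sq_nonneg _
  nlinarith

lemma ridge_bound {d : ℕ} (a : Fin d → ℝ) (P : ℝ[X]) (x : Fin d → ℝ) :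
    |P.eval (∑ j, a j * x j)| ≤
      ((∑ i ∈ Finset.range (P.natDegree + 1), |P.coeff i|) *
        (1 + ∑ j, (a j) ^ 2) ^ P.natDegree) * ∏ j, (1 + (x j) ^ 2) ^ P.natDegree := by
  refine (poly_abs_bound P _).trans ?_
  rw [mul_assoc, Finset.prod_pow, ← mul_pow]
  refine mul_le_mul_of_nonneg_left ?_ (Finset.sum_nonneg fun i _ => abs_nonneg _)
  refine pow_le_pow_left₀ (by nlinarith [sq_nonneg (∑ j, a j * x j)]) ?_ _
  exact one_add_dot_sq_le a x

lemma integrable_gaussianPi_prod {d : ℕ} {f : Fin d → ℝ → ℝ}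
    (hf : ∀ i, Integrable (f i) (gaussianReal 0 1)) :
    Integrable (fun x : Fin d → ℝ => ∏ i, f i (x i)) (stdGaussian d) := by
  unfold _root_.stdGaussian
  induction d with
  | zero => simpa using integrable_const (1 : ℝ)
  | succ n ih =>
    have mp := (MeasureTheory.measurePreserving_piFinSuccAbove
      (fun _ : Fin (n + 1) => gaussianReal 0 1) 0).symm
    rw [← mp.integrable_comp_emb (MeasurableEquiv.measurableEmbedding _)]
    simp_rw [MeasurableEquiv.piFinSuccAbove_symm_apply, Fin.insertNthEquiv,
      Fin.prod_univ_succ, Fin.insertNth_zero]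
    simp only [Fin.zero_succAbove, Function.comp_def, Equiv.coe_fn_mk, Fin.cons_zero, Fin.cons_succ]
    exact MeasureTheory.Integrable.mul_prod (hf 0) (ih fun i => hf i.succ)

lemma integrable_one_add_sq_pow (N : ℕ) :
    Integrable (fun t : ℝ => (1 + t ^ 2) ^ N) (gaussianReal 0 1) := by
  have : (fun t : ℝ => (1 + t ^ 2) ^ N) =
      fun t => ((1 + Polynomial.X ^ 2 : ℝ[X]) ^ N).eval t := by
    funext t; simp
  rw [this]
  exact integrable_eval_gaussianReal _

lemma continuous_ridge {d : ℕ} (a : Fin d → ℝ) (P : ℝ[X]) :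
    Continuous fun x : Fin d → ℝ => P.eval (∑ j, a j * x j) := by
  have h1 : Continuous fun x : Fin d → ℝ => ∑ j, a j * x j :=
    continuous_finset_sum _ fun j _ => continuous_const.mul (continuous_apply j)
  exact P.continuous.comp h1

lemma integrable_ridge3 {d : ℕ} (a b c : Fin d → ℝ) (P Q R : ℝ[X]) :
    Integrable (fun x : Fin d → ℝ =>
      P.eval (∑ j, a j * x j) * Q.eval (∑ j, b j * x j) * R.eval (∑ j, c j * x j))
      (stdGaussian d) := by
  set N := P.natDegree + Q.natDegree + R.natDegree with hN
  set BP := (∑ i ∈ Finset.range (P.natDegree + 1), |P.coeff i|) *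
      (1 + ∑ j, (a j) ^ 2) ^ P.natDegree with hBP
  set BQ := (∑ i ∈ Finset.range (Q.natDegree + 1), |Q.coeff i|) *
      (1 + ∑ j, (b j) ^ 2) ^ Q.natDegree with hBQ
  set BR := (∑ i ∈ Finset.range (R.natDegree + 1), |R.coeff i|) *
      (1 + ∑ j, (c j) ^ 2) ^ R.natDegree with hBR
  have hBPn : 0 ≤ BP := by
    refine mul_nonneg (Finset.sum_nonneg fun i _ => abs_nonneg _) (pow_nonneg ?_ _)
    nlinarith [Finset.sum_nonneg (fun j (_ : j ∈ Finset.univ) => sq_nonneg (a j))]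
  have hBQn : 0 ≤ BQ := by
    refine mul_nonneg (Finset.sum_nonneg fun i _ => abs_nonneg _) (pow_nonneg ?_ _)
    nlinarith [Finset.sum_nonneg (fun j (_ : j ∈ Finset.univ) => sq_nonneg (b j))]
  have hBRn : 0 ≤ BR := by
    refine mul_nonneg (Finset.sum_nonneg fun i _ => abs_nonneg _) (pow_nonneg ?_ _)
    nlinarith [Finset.sum_nonneg (fun j (_ : j ∈ Finset.univ) => sq_nonneg (c j))]
  have hmaj : Integrable (fun x : Fin d → ℝ =>
      (BP * BQ * BR) * ∏ j, (1 + (x j) ^ 2) ^ N) (stdGaussian d) :=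
    (integrable_gaussianPi_prod fun i => integrable_one_add_sq_pow N).const_mul _
  refine hmaj.mono' ?_ ?_
  · exact (((continuous_ridge a P).mul (continuous_ridge b Q)).mul
      (continuous_ridge c R)).aestronglyMeasurable
  · filter_upwards with x
    rw [Real.norm_eq_abs, abs_mul, abs_mul]
    have h1 := ridge_bound a P x
    have h2 := ridge_bound b Q x
    have h3 := ridge_bound c R x
    have hp1 : (0:ℝ) ≤ ∏ j, (1 + (x j) ^ 2) ^ P.natDegree :=
      Finset.prod_nonneg fun j _ => pow_nonneg (by nlinarith [sq_nonneg (x j)]) _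
    have hp2 : (0:ℝ) ≤ ∏ j, (1 + (x j) ^ 2) ^ Q.natDegree :=
      Finset.prod_nonneg fun j _ => pow_nonneg (by nlinarith [sq_nonneg (x j)]) _
    have hp3 : (0:ℝ) ≤ ∏ j, (1 + (x j) ^ 2) ^ R.natDegree :=
      Finset.prod_nonneg fun j _ => pow_nonneg (by nlinarith [sq_nonneg (x j)]) _
    have key : |P.eval (∑ j, a j * x j)| * |Q.eval (∑ j, b j * x j)| * |R.eval (∑ j, c j * x j)|
        ≤ (BP * ∏ j, (1 + (x j) ^ 2) ^ P.natDegree) * (BQ * ∏ j, (1 + (x j) ^ 2) ^ Q.natDegree)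
          * (BR * ∏ j, (1 + (x j) ^ 2) ^ R.natDegree) := by
      have m1 : |P.eval (∑ j, a j * x j)| * |Q.eval (∑ j, b j * x j)|
          ≤ (BP * ∏ j, (1 + (x j) ^ 2) ^ P.natDegree) *
            (BQ * ∏ j, (1 + (x j) ^ 2) ^ Q.natDegree) :=
        mul_le_mul h1 h2 (abs_nonneg _) (mul_nonneg hBPn hp1)
      exact mul_le_mul m1 h3 (abs_nonneg _)
        (mul_nonneg (mul_nonneg hBPn hp1) (mul_nonneg hBQn hp2))
    refine key.trans (le_of_eq ?_)
    simp_rw [hN, pow_add, Finset.prod_mul_distrib]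
    ring


lemma integrable_ridge2 {d : ℕ} (a b : Fin d → ℝ) (P Q : ℝ[X]) :
    Integrable (fun x : Fin d → ℝ =>
      P.eval (∑ j, a j * x j) * Q.eval (∑ j, b j * x j)) (stdGaussian d) :=
  (integrable_ridge3 a b b P Q 1).congr (Filter.Eventually.of_forall fun x => by simp)

lemma integrable_coord_ridge2 {d : ℕ} (i : Fin d) (a b : Fin d → ℝ) (P Q : ℝ[X]) :
    Integrable (fun x : Fin d → ℝ =>
      x i * (P.eval (∑ j, a j * x j) * Q.eval (∑ j, b j * x j))) (stdGaussian d) := by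
  refine (integrable_ridge3 a b (Pi.single i 1) P Q Polynomial.X).congr
    (Filter.Eventually.of_forall fun x => ?_)
  have : ∑ j, (Pi.single i (1:ℝ) : Fin d → ℝ) j * x j = x i := by
    rw [Finset.sum_eq_single i] <;> simp +contextual [Pi.single_apply]
  simp only [Polynomial.eval_X, this]
  ring

/-- Gaussian integration by parts in coordinate `i`. -/
lemma cibp {d : ℕ} (i : Fin d) (a b : Fin d → ℝ) (P Q : ℝ[X]) :
    ∫ x, x i * (P.eval (∑ j, a j * x j) * Q.eval (∑ j, b j * x j)) ∂(stdGaussian d)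
      = a i * ∫ x, (Polynomial.derivative P).eval (∑ j, a j * x j) *
          Q.eval (∑ j, b j * x j) ∂(stdGaussian d)
      + b i * ∫ x, P.eval (∑ j, a j * x j) *
          (Polynomial.derivative Q).eval (∑ j, b j * x j) ∂(stdGaussian d) := by
  match d with
  | 0 => exact i.elim0
  | n + 1 =>
  set γ := gaussianReal 0 1 with hγ
  set γn : Measure (Fin n → ℝ) := Measure.pi (fun _ => gaussianReal 0 1) with hγn
  set F₀ := fun x : Fin (n+1) → ℝ =>
    x i * (P.eval (∑ j, a j * x j) * Q.eval (∑ j, b j * x j)) with hF₀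
  set F1 := fun x : Fin (n+1) → ℝ =>
    (Polynomial.derivative P).eval (∑ j, a j * x j) * Q.eval (∑ j, b j * x j) with hF1
  set F2 := fun x : Fin (n+1) → ℝ =>
    P.eval (∑ j, a j * x j) * (Polynomial.derivative Q).eval (∑ j, b j * x j) with hF2
  set G := fun x : Fin (n+1) → ℝ => a i * F1 x + b i * F2 x with hG
  have mp : MeasurePreserving (MeasurableEquiv.piFinSuccAbove (fun _ : Fin (n+1) => ℝ) i)
      (stdGaussian (n+1)) (γ.prod γn) :=
    MeasureTheory.measurePreserving_piFinSuccAbove (fun _ => gaussianReal 0 1) i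
  have hsymm : ∀ p : ℝ × (Fin n → ℝ),
      (MeasurableEquiv.piFinSuccAbove (fun _ : Fin (n+1) => ℝ) i).symm p
        = i.insertNth p.1 p.2 := by
    intro p
    rw [MeasurableEquiv.piFinSuccAbove_symm_apply]
    rfl
  have trans : ∀ f : (Fin (n+1) → ℝ) → ℝ,
      ∫ x, f x ∂(stdGaussian (n+1)) =
        ∫ p : ℝ × (Fin n → ℝ), f (i.insertNth p.1 p.2) ∂(γ.prod γn) := by
    intro f
    rw [← (mp.symm).integral_comp (MeasurableEquiv.measurableEmbedding _) f]
    exact (integral_congr_ae (Filter.Eventually.of_forall fun p => by rw [hsymm p])).symm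
  have transInt : ∀ f : (Fin (n+1) → ℝ) → ℝ, Integrable f (stdGaussian (n+1)) →
      Integrable (fun p : ℝ × (Fin n → ℝ) => f (i.insertNth p.1 p.2)) (γ.prod γn) := by
    intro f hf
    have := ((mp.symm).integrable_comp_emb (MeasurableEquiv.measurableEmbedding _)).2 hf
    refine this.congr (Filter.Eventually.of_forall fun p => ?_)
    rw [Function.comp_apply, hsymm p]
  -- the 1D polynomial in `t` for fixed `y`
  set LA := fun y : Fin n → ℝ =>
    Polynomial.C (a i) * Polynomial.X + Polynomial.C (∑ j, a (i.succAbove j) * y j) with hLA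
  set LB := fun y : Fin n → ℝ =>
    Polynomial.C (b i) * Polynomial.X + Polynomial.C (∑ j, b (i.succAbove j) * y j) with hLB
  set Ry := fun y : Fin n → ℝ => P.comp (LA y) * Q.comp (LB y) with hRy
  have sumA : ∀ (c : Fin (n+1) → ℝ) (t : ℝ) (y : Fin n → ℝ),
      ∑ j, c j * ((i.insertNth t y : Fin (n+1) → ℝ) j) = c i * t + ∑ j, c (i.succAbove j) * y j := by
    intro c t y
    rw [Fin.sum_univ_succAbove (fun j => c j * ((i.insertNth t y : Fin (n+1) → ℝ) j)) i]
    simp [Fin.insertNth_apply_same, Fin.insertNth_apply_succAbove]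
  have evalA : ∀ (y : Fin n → ℝ) (t : ℝ),
      (P.comp (LA y)).eval t = P.eval (∑ j, a j * ((i.insertNth t y : Fin (n+1) → ℝ) j)) := by
    intro y t
    simp only [hLA, Polynomial.eval_comp, Polynomial.eval_add, Polynomial.eval_mul,
      Polynomial.eval_C, Polynomial.eval_X, sumA a t y]
  have evalB : ∀ (y : Fin n → ℝ) (t : ℝ),
      (Q.comp (LB y)).eval t = Q.eval (∑ j, b j * ((i.insertNth t y : Fin (n+1) → ℝ) j)) := by
    intro y t
    simp only [hLB, Polynomial.eval_comp, Polynomial.eval_add, Polynomial.eval_mul,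
      Polynomial.eval_C, Polynomial.eval_X, sumA b t y]
  have evalA' : ∀ (y : Fin n → ℝ) (t : ℝ),
      ((Polynomial.derivative P).comp (LA y)).eval t =
        (Polynomial.derivative P).eval (∑ j, a j * ((i.insertNth t y : Fin (n+1) → ℝ) j)) := by
    intro y t
    simp only [hLA, Polynomial.eval_comp, Polynomial.eval_add, Polynomial.eval_mul,
      Polynomial.eval_C, Polynomial.eval_X, sumA a t y]
  have evalB' : ∀ (y : Fin n → ℝ) (t : ℝ),
      ((Polynomial.derivative Q).comp (LB y)).eval t =
        (Polynomial.derivative Q).eval (∑ j, b j * ((i.insertNth t y : Fin (n+1) → ℝ) j)) := by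
    intro y t
    simp only [hLB, Polynomial.eval_comp, Polynomial.eval_add, Polynomial.eval_mul,
      Polynomial.eval_C, Polynomial.eval_X, sumA b t y]
  have derivLA : ∀ y, Polynomial.derivative (LA y) = Polynomial.C (a i) := by
    intro y; rw [hLA]; simp
  have derivLB : ∀ y, Polynomial.derivative (LB y) = Polynomial.C (b i) := by
    intro y; rw [hLB]; simp
  have inner : ∀ y : Fin n → ℝ,
      ∫ t, F₀ (i.insertNth t y) ∂γ = ∫ t, G (i.insertNth t y) ∂γ := by
    intro y
    have e1 : (fun t => F₀ (i.insertNth t y)) = fun t => t * (Ry y).eval t := by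
      funext t
      simp only [hF₀, hRy, Polynomial.eval_mul, evalA, evalB, Fin.insertNth_apply_same]
    have e2 : (fun t => (Polynomial.derivative (Ry y)).eval t) =
        fun t => G (i.insertNth t y) := by
      funext t
      simp only [hRy, Polynomial.derivative_mul, Polynomial.derivative_comp, derivLA, derivLB,
        Polynomial.eval_add, Polynomial.eval_mul, Polynomial.eval_C,
        evalA, evalB, evalA', evalB', hG, hF1, hF2]
      ring
    rw [e1, key1D, e2]
  have intF0 : Integrable F₀ (stdGaussian (n+1)) := integrable_coord_ridge2 i a b P Q
  have intF1 : Integrable F1 (stdGaussian (n+1)) := integrable_ridge2 a b _ Q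
  have intF2 : Integrable F2 (stdGaussian (n+1)) := integrable_ridge2 a b P _
  have intG : Integrable G (stdGaussian (n+1)) :=
    ((intF1.const_mul (a i)).add (intF2.const_mul (b i)))
  calc ∫ x, F₀ x ∂(stdGaussian (n+1))
      = ∫ p : ℝ × (Fin n → ℝ), F₀ (i.insertNth p.1 p.2) ∂(γ.prod γn) := trans F₀
    _ = ∫ y, ∫ t, F₀ (i.insertNth t y) ∂γ ∂γn :=
        MeasureTheory.integral_prod_symm _ (transInt F₀ intF0)
    _ = ∫ y, ∫ t, G (i.insertNth t y) ∂γ ∂γn := by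
        exact integral_congr_ae (Filter.Eventually.of_forall fun y => inner y)
    _ = ∫ p : ℝ × (Fin n → ℝ), G (i.insertNth p.1 p.2) ∂(γ.prod γn) :=
        (MeasureTheory.integral_prod_symm _ (transInt G intG)).symm
    _ = ∫ x, G x ∂(stdGaussian (n+1)) := (trans G).symm
    _ = a i * ∫ x, F1 x ∂(stdGaussian (n+1)) + b i * ∫ x, F2 x ∂(stdGaussian (n+1)) := by
        rw [hG]
        rw [MeasureTheory.integral_add (intF1.const_mul _) (intF2.const_mul _),
          MeasureTheory.integral_const_mul, MeasureTheory.integral_const_mul]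


/-- Key orthogonality-type identity: the Gaussian correlation of two equal-degree
Hermite ridge functions. -/
lemma integral_hermite_ridge {d : ℕ} (a b : Fin d → ℝ) (ha : ∑ j, (a j) ^ 2 = 1) (n : ℕ) :
    ∫ x, (Hpoly n).eval (∑ j, a j * x j) * (Hpoly n).eval (∑ j, b j * x j) ∂(stdGaussian d)
      = (n.factorial : ℝ) * (∑ j, a j * b j) ^ n := by
  induction n with
  | zero =>
    simp only [Hpoly_zero, Polynomial.eval_one, one_mul, pow_zero, Nat.factorial_zero,
      Nat.cast_one, mul_one]
    simp [MeasureTheory.integral_const]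
  | succ n ih =>
    set A := fun x : Fin d → ℝ => ∑ j, a j * x j with hA
    set B := fun x : Fin d → ℝ => ∑ j, b j * x j with hB
    set ρ := ∑ j, a j * b j with hρ
    set I1 := ∫ x, (Polynomial.derivative (Hpoly n)).eval (A x) *
      (Hpoly (n+1)).eval (B x) ∂(stdGaussian d) with hI1
    set I2 := ∫ x, (Hpoly n).eval (A x) *
      (Polynomial.derivative (Hpoly (n+1))).eval (B x) ∂(stdGaussian d) with hI2
    have int1 : Integrable (fun x => (Polynomial.derivative (Hpoly n)).eval (A x) *
        (Hpoly (n+1)).eval (B x)) (stdGaussian d) := integrable_ridge2 a b _ _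
    have intc : ∀ i : Fin d, Integrable (fun x : Fin d → ℝ =>
        a i * (x i * ((Hpoly n).eval (A x) * (Hpoly (n+1)).eval (B x)))) (stdGaussian d) :=
      fun i => (integrable_coord_ridge2 i a b _ _).const_mul _
    have e : ∀ x : Fin d → ℝ, (Hpoly (n+1)).eval (A x) * (Hpoly (n+1)).eval (B x)
        = (∑ i, a i * (x i * ((Hpoly n).eval (A x) * (Hpoly (n+1)).eval (B x))))
          - (Polynomial.derivative (Hpoly n)).eval (A x) * (Hpoly (n+1)).eval (B x) := by
      intro x
      have hsum : (∑ i, a i * (x i * ((Hpoly n).eval (A x) * (Hpoly (n+1)).eval (B x))))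
          = A x * ((Hpoly n).eval (A x) * (Hpoly (n+1)).eval (B x)) := by
        rw [hA]
        simp_rw [← mul_assoc]
        rw [← Finset.sum_mul, Finset.sum_mul (f := fun j => a j * x j)]
      rw [hsum, Hpoly_succ n]
      simp only [Polynomial.eval_sub, Polynomial.eval_mul, Polynomial.eval_X]
      ring
    have step1 : ∫ x, (Hpoly (n+1)).eval (A x) * (Hpoly (n+1)).eval (B x) ∂(stdGaussian d)
        = (∑ i, a i * (a i * I1 + b i * I2)) - I1 := by
      rw [MeasureTheory.integral_congr_ae (Filter.Eventually.of_forall e),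
        MeasureTheory.integral_sub (MeasureTheory.integrable_finset_sum _ fun i _ => intc i) int1,
        MeasureTheory.integral_finset_sum _ fun i _ => intc i]
      congr 1
      refine Finset.sum_congr rfl fun i _ => ?_
      rw [MeasureTheory.integral_const_mul, cibp i a b (Hpoly n) (Hpoly (n+1))]
    have step2 : (∑ i, a i * (a i * I1 + b i * I2)) = I1 + ρ * I2 := by
      have : ∀ i ∈ Finset.univ, a i * (a i * I1 + b i * I2)
          = (a i) ^ 2 * I1 + (a i * b i) * I2 := fun i _ => by ring
      rw [Finset.sum_congr rfl this, Finset.sum_add_distrib, ← Finset.sum_mul, ← Finset.sum_mul,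
        ha, one_mul, hρ]
    have step3 : I2 = ((n : ℝ) + 1) * ((n.factorial : ℝ) * ρ ^ n) := by
      rw [hI2]
      have : ∀ x : Fin d → ℝ, (Hpoly n).eval (A x) *
          (Polynomial.derivative (Hpoly (n+1))).eval (B x)
          = ((n : ℝ) + 1) * ((Hpoly n).eval (A x) * (Hpoly n).eval (B x)) := by
        intro x
        rw [derivative_Hpoly, Polynomial.eval_mul, Polynomial.eval_C]
        ring
      rw [MeasureTheory.integral_congr_ae (Filter.Eventually.of_forall this),
        MeasureTheory.integral_const_mul, ih]
    rw [step1, step2, step3]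
    rw [Nat.factorial_succ]
    push_cast
    ring

end Aux

/-- Separation of Hermite ridge packing functions: if the `θ_k` are unit vectors with
pairwise inner products at most `9/10` in magnitude, `ω, ω'` are binary strings of weight
`L` at Hamming distance at least `L/5`, and `ℓ > log(4L)/log(10/9)`, then
`E[(f_ω(X) − f_{ω'}(X))²] ≥ v1²/(10L)` for `X ~ N(0, I_d)`. -/
theorem hermite_packing_separation (d M L ℓ : ℕ) (hd : 0 < d) (hM : 0 < M) (hL : 0 < L)
    (hℓ0 : 0 < ℓ) (v1 : ℝ) (hv1 : 0 < v1) (θ : Fin M → Fin d → ℝ)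
    (hunit : ∀ k, Real.sqrt (∑ j, θ k j ^ 2) = 1)
    (hip : ∀ i j : Fin M, i ≠ j → |∑ r, θ i r * θ j r| ≤ 9 / 10)
    (ω ω' : Fin M → ℝ) (hω : ∀ k, ω k = 0 ∨ ω k = 1) (hω' : ∀ k, ω' k = 0 ∨ ω' k = 1)
    (hwω : ∑ k, ω k = L) (hwω' : ∑ k, ω' k = L)
    (hdist : (L : ℝ) / 5 ≤ ((Finset.univ.filter fun k => ω k ≠ ω' k).card : ℝ))
    (hℓ : (ℓ : ℝ) > Real.log (4 * L) / Real.log (10 / 9)) :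
    v1 ^ 2 / (10 * L) ≤
      ∫ x, ((v1 / L) * ∑ k, ω k * stdHermite ℓ (∑ j, θ k j * x j) -
        (v1 / L) * ∑ k, ω' k * stdHermite ℓ (∑ j, θ k j * x j)) ^ 2 ∂stdGaussian d := by
  classical
  have hL0 : (0:ℝ) < L := by exact_mod_cast hL
  have hfac0 : (0:ℝ) < (ℓ.factorial : ℝ) := by exact_mod_cast ℓ.factorial_pos
  set c := fun k : Fin M => ω k - ω' k with hc
  set f := fun (k : Fin M) (x : Fin d → ℝ) => (Hpoly ℓ).eval (∑ j, θ k j * x j) with hf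
  set ρf := fun (k k' : Fin M) => ∑ j, θ k j * θ k' j with hρf
  set S := (Finset.univ.filter fun k => ω k ≠ ω' k) with hS
  have hunit' : ∀ k, ∑ j, (θ k j) ^ 2 = 1 := by
    intro k
    have h1 : (0:ℝ) ≤ ∑ j, (θ k j) ^ 2 := Finset.sum_nonneg fun j _ => sq_nonneg _
    have h2 := hunit k
    nlinarith [Real.sq_sqrt h1]
  have key : ∀ k k', ∫ x, f k x * f k' x ∂(stdGaussian d)
      = (ℓ.factorial : ℝ) * (ρf k k') ^ ℓ := fun k k' =>
    integral_hermite_ridge (θ k) (θ k') (hunit' k) ℓ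
  have intkk : ∀ k k', Integrable
      (fun x : Fin d → ℝ => (c k * f k x) * (c k' * f k' x)) (stdGaussian d) := by
    intro k k'
    refine ((integrable_ridge2 (θ k) (θ k') (Hpoly ℓ) (Hpoly ℓ)).const_mul
      (c k * c k')).congr (Filter.Eventually.of_forall fun x => ?_)
    simp only [hf]
    ring
  set s := Real.sqrt (ℓ.factorial : ℝ) with hs
  have hs2 : s ^ 2 = (ℓ.factorial : ℝ) := Real.sq_sqrt hfac0.le
  have hpt : ∀ x : Fin d → ℝ,
      ((v1 / L) * ∑ k, ω k * stdHermite ℓ (∑ j, θ k j * x j) -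
        (v1 / L) * ∑ k, ω' k * stdHermite ℓ (∑ j, θ k j * x j)) ^ 2
      = (v1 / L) ^ 2 / (ℓ.factorial : ℝ) *
          ∑ k, ∑ k', (c k * f k x) * (c k' * f k' x) := by
    intro x
    have hφ : ∀ k, stdHermite ℓ (∑ j, θ k j * x j) = f k x / s := fun k =>
      stdHermite_eq ℓ _
    simp_rw [hφ]
    have hdiff : (∑ k, ω k * (f k x / s)) - (∑ k, ω' k * (f k x / s))
        = (∑ k, c k * f k x) / s := by
      rw [← Finset.sum_sub_distrib, Finset.sum_div]
      refine Finset.sum_congr rfl fun k _ => ?_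
      simp only [hc]
      ring
    have hsum2 : (∑ k, c k * f k x) ^ 2
        = ∑ k, ∑ k', (c k * f k x) * (c k' * f k' x) := by
      rw [sq, Finset.sum_mul_sum]
    rw [← hsum2, ← mul_sub, hdiff]
    simp only [mul_pow, div_pow]
    rw [hs2]
    ring
  set T := ∑ k, ∑ k', c k * c k' * (ρf k k') ^ ℓ with hT
  have hint : ∫ x, ((v1 / L) * ∑ k, ω k * stdHermite ℓ (∑ j, θ k j * x j) -
        (v1 / L) * ∑ k, ω' k * stdHermite ℓ (∑ j, θ k j * x j)) ^ 2 ∂stdGaussian d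
      = (v1 / L) ^ 2 * T := by
    rw [MeasureTheory.integral_congr_ae (Filter.Eventually.of_forall hpt),
      MeasureTheory.integral_const_mul,
      MeasureTheory.integral_finset_sum _
        (fun k _ => MeasureTheory.integrable_finset_sum _ fun k' _ => intkk k k')]
    have h1 : ∀ k, ∫ x, ∑ k', (c k * f k x) * (c k' * f k' x) ∂(stdGaussian d)
        = ∑ k', c k * c k' * ((ℓ.factorial : ℝ) * (ρf k k') ^ ℓ) := by
      intro k
      rw [MeasureTheory.integral_finset_sum _ fun k' _ => intkk k k']
      refine Finset.sum_congr rfl fun k' _ => ?_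
      calc ∫ x, (c k * f k x) * (c k' * f k' x) ∂(stdGaussian d)
          = ∫ x, (c k * c k') * (f k x * f k' x) ∂(stdGaussian d) :=
            MeasureTheory.integral_congr_ae (Filter.Eventually.of_forall fun x => by ring)
        _ = c k * c k' * ((ℓ.factorial : ℝ) * (ρf k k') ^ ℓ) := by
            rw [MeasureTheory.integral_const_mul, key]
    simp_rw [h1]
    have h2 : ∑ k, ∑ k', c k * c k' * ((ℓ.factorial : ℝ) * (ρf k k') ^ ℓ)
        = (ℓ.factorial : ℝ) * T := by
      rw [hT, Finset.mul_sum]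
      refine Finset.sum_congr rfl fun k _ => ?_
      rw [Finset.mul_sum]
      exact Finset.sum_congr rfl fun k' _ => by ring
    rw [h2]
    field_simp
  rw [hint]
  -- now the arithmetic lower bound on T
  set q := ((9:ℝ)/10) ^ ℓ with hq
  have hq0 : 0 ≤ q := by positivity
  have hqle : q ≤ 1 / (4 * L) := by
    have hlog9 : 0 < Real.log (10 / 9) := Real.log_pos (by norm_num)
    have h4L : (0:ℝ) < 4 * L := by positivity
    have hlt : Real.log (4 * L) < ℓ * Real.log (10 / 9) := by
      rw [gt_iff_lt, div_lt_iff₀ hlog9] at hℓ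
      linarith
    have hexp : (4:ℝ) * L < ((10:ℝ)/9) ^ ℓ := by
      have h2 : Real.log ((4:ℝ) * L) < Real.log (((10:ℝ)/9) ^ ℓ) := by
        rw [Real.log_pow]
        exact_mod_cast hlt
      exact (Real.log_lt_log_iff h4L (by positivity)).1 h2
    have h910 : ((9:ℝ)/10) = (((10:ℝ)/9))⁻¹ := by norm_num
    rw [hq, h910, inv_pow, one_div]
    exact inv_anti₀ h4L hexp.le
  have habs : ∀ k, |c k| = if ω k ≠ ω' k then (1:ℝ) else 0 := by
    intro k
    rcases hω k with h1 | h1 <;> rcases hω' k with h2 | h2 <;>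
      simp [hc, h1, h2] <;> norm_num
  have hsumabs : ∑ k, |c k| = (S.card : ℝ) := by
    simp_rw [habs]
    rw [Finset.sum_ite, Finset.sum_const, Finset.sum_const]
    simp [hS]
  have hcc : ∀ k, c k * c k = |c k| := by
    intro k
    rcases hω k with h1 | h1 <;> rcases hω' k with h2 | h2 <;> simp [hc, h1, h2] <;> norm_num
  have hdiag : ∑ k, c k * c k * (ρf k k) ^ ℓ = (S.card : ℝ) := by
    rw [← hsumabs]
    refine Finset.sum_congr rfl fun k _ => ?_
    have : ρf k k = 1 := by
      rw [hρf]
      simp_rw [← sq]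
      exact hunit' k
    rw [this, one_pow, mul_one, hcc]
  have hsplit : T = (∑ k, c k * c k * (ρf k k) ^ ℓ)
      + ∑ k, ∑ k' ∈ Finset.univ.erase k, c k * c k' * (ρf k k') ^ ℓ := by
    rw [hT, ← Finset.sum_add_distrib]
    refine Finset.sum_congr rfl fun k _ => ?_
    exact (Finset.add_sum_erase _ _ (Finset.mem_univ k)).symm
  have hoff : |∑ k, ∑ k' ∈ Finset.univ.erase k, c k * c k' * (ρf k k') ^ ℓ|
      ≤ (S.card : ℝ) ^ 2 * q := by
    calc |∑ k, ∑ k' ∈ Finset.univ.erase k, c k * c k' * (ρf k k') ^ ℓ|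
        ≤ ∑ k, |∑ k' ∈ Finset.univ.erase k, c k * c k' * (ρf k k') ^ ℓ| :=
          Finset.abs_sum_le_sum_abs _ _
      _ ≤ ∑ k, ∑ k' ∈ Finset.univ.erase k, |c k| * |c k'| * q := by
          refine Finset.sum_le_sum fun k _ => ?_
          refine (Finset.abs_sum_le_sum_abs _ _).trans (Finset.sum_le_sum fun k' hk' => ?_)
          rw [abs_mul, abs_mul, abs_pow]
          have hne : k ≠ k' := fun h => (Finset.mem_erase.1 hk').1 h.symm
          have h1 : |ρf k k'| ^ ℓ ≤ q := by
            rw [hq]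
            exact pow_le_pow_left₀ (abs_nonneg _) (hip k k' hne) ℓ
          exact mul_le_mul_of_nonneg_left h1 (mul_nonneg (abs_nonneg _) (abs_nonneg _))
      _ ≤ ∑ k, ∑ k' : Fin M, |c k| * |c k'| * q := by
          refine Finset.sum_le_sum fun k _ => ?_
          refine Finset.sum_le_sum_of_subset_of_nonneg (Finset.erase_subset _ _)
            fun k' _ _ => by positivity
      _ = (S.card : ℝ) ^ 2 * q := by
          have e : ∀ k : Fin M, ∑ k' : Fin M, |c k| * |c k'| * q
              = |c k| * ((S.card : ℝ) * q) := by
            intro k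
            calc ∑ k' : Fin M, |c k| * |c k'| * q
                = |c k| * ∑ k' : Fin M, |c k'| * q := by
                  rw [Finset.mul_sum]
                  exact Finset.sum_congr rfl fun k' _ => by ring
              _ = |c k| * ((S.card : ℝ) * q) := by rw [← Finset.sum_mul, hsumabs]
          rw [Finset.sum_congr rfl fun k _ => e k, ← Finset.sum_mul, hsumabs]
          ring
  have hcard2L : (S.card : ℝ) ≤ 2 * L := by
    have hAcard : ((Finset.univ.filter fun k => ω k = 1).card : ℝ) = L := by
      rw [← hwω, ← Finset.sum_boole]
      exact Finset.sum_congr rfl fun k _ => by rcases hω k with h | h <;> simp [h]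
    have hBcard : ((Finset.univ.filter fun k => ω' k = 1).card : ℝ) = L := by
      rw [← hwω', ← Finset.sum_boole]
      exact Finset.sum_congr rfl fun k _ => by rcases hω' k with h | h <;> simp [h]
    have hsub : S ⊆ (Finset.univ.filter fun k => ω k = 1) ∪
        (Finset.univ.filter fun k => ω' k = 1) := by
      intro k hk
      rw [hS, Finset.mem_filter] at hk
      rcases hω k with h | h
      · rcases hω' k with h' | h'
        · exact absurd (h.trans h'.symm) hk.2
        · exact Finset.mem_union_right _ (Finset.mem_filter.2 ⟨Finset.mem_univ _, h'⟩)
      · exact Finset.mem_union_left _ (Finset.mem_filter.2 ⟨Finset.mem_univ _, h⟩)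
    have hcard : S.card ≤ (Finset.univ.filter fun k => ω k = 1).card +
        (Finset.univ.filter fun k => ω' k = 1).card :=
      (Finset.card_le_card hsub).trans (Finset.card_union_le _ _)
    have := (Nat.cast_le (α := ℝ)).2 hcard
    rw [Nat.cast_add, hAcard, hBcard] at this
    linarith
  have hT10 : (L : ℝ) / 10 ≤ T := by
    have h1 : (S.card : ℝ) - (S.card : ℝ) ^ 2 * q ≤ T := by
      rw [hsplit, hdiag]
      have := neg_abs_le (∑ k, ∑ k' ∈ Finset.univ.erase k, c k * c k' * (ρf k k') ^ ℓ)
      linarith [hoff]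
    have hcn : (0:ℝ) ≤ (S.card : ℝ) := Nat.cast_nonneg _
    have h2 : (S.card : ℝ) ^ 2 * q ≤ (S.card : ℝ) ^ 2 * (1 / (4 * L)) :=
      mul_le_mul_of_nonneg_left hqle (sq_nonneg _)
    have h4 : (S.card : ℝ) ^ 2 * (1 / (4 * L)) ≤ (S.card : ℝ) / 2 := by
      rw [mul_one_div, div_le_div_iff₀ (by positivity) (by norm_num)]
      nlinarith
    linarith
  have hfin : v1 ^ 2 / (10 * L) = (v1 / L) ^ 2 * ((L : ℝ) / 10) := by
    field_simp
  rw [hfin]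
  exact mul_le_mul_of_nonneg_left hT10 (sq_nonneg _)


end
end

section
/- Let d and v0 be positive integers with v0² ≤ d/10 and d ≥ 10, and let v1 > 0. Then there exists a set B of at least M := √(binomial(d, v0²)) vectors in ℝ^d such that each θ ∈ B has ‖θ‖₂ = 1 and ‖θ‖₁ = v0, and |θ·θ'| ≤ 9/10 for all distinct θ, θ' ∈ B. (Each θ has the form a/v0 for some a ∈ {0,1}^d of Hamming weight v0².) -/
open Finset

-- L3: (d/k)^k ≤ C(d,k)
lemma aux_pow_le_choose : ∀ (k d : ℕ), k ≤ d → ((d:ℝ)/k)^k ≤ d.choose k := by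
  intro k
  induction k with
  | zero => intro d _; simp
  | succ k ih =>
    intro d hkd
    have hd1 : 1 ≤ d := le_trans (Nat.succ_le_succ (Nat.zero_le k)) hkd
    have hk' : k ≤ d - 1 := by omega
    have IH := ih (d-1) hk'
    have key : (d:ℝ) * ((d-1 : ℕ).choose k) = (d.choose (k+1)) * ((k:ℝ)+1) := by
      have := Nat.add_one_mul_choose_eq (d-1) k
      have hd : (d-1)+1 = d := by omega
      rw [hd] at this
      exact_mod_cast congrArg (Nat.cast : ℕ → ℝ) this
    rcases Nat.eq_zero_or_pos k with hk0 | hk0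
    · subst hk0
      simp only [zero_add, pow_one, Nat.cast_one, Nat.choose_one_right]
      rw [div_le_iff₀ (by norm_num)]
      simp
    have hkpos : (0:ℝ) < (k:ℝ) := by exact_mod_cast hk0
    have hfrac : (d:ℝ)/((k:ℝ)+1) ≤ ((d-1:ℕ):ℝ)/(k:ℝ) := by
      rw [div_le_div_iff₀ (by positivity) hkpos]
      have hcast : ((d-1:ℕ):ℝ) = (d:ℝ) - 1 := by
        push_cast [Nat.cast_sub hd1]; ring
      rw [hcast]
      have hdk : ((k:ℝ)+1) ≤ (d:ℝ) := by exact_mod_cast hkd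
      nlinarith
    have h1 : ((d:ℝ)/((k:ℝ)+1))^k ≤ ((d-1:ℕ).choose k : ℝ) := by
      calc ((d:ℝ)/((k:ℝ)+1))^k ≤ (((d-1:ℕ):ℝ)/(k:ℝ))^k := by
            gcongr
        _ ≤ _ := IH
    have hpos : (0:ℝ) < (k:ℝ)+1 := by positivity
    have expand : ((d:ℝ)/((k:ℝ)+1))^(k+1) = (d:ℝ)/((k:ℝ)+1) * ((d:ℝ)/((k:ℝ)+1))^k := by ring
    push_cast
    rw [expand]
    calc (d:ℝ)/((k:ℝ)+1) * ((d:ℝ)/((k:ℝ)+1))^k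
        ≤ (d:ℝ)/((k:ℝ)+1) * ((d-1:ℕ).choose k : ℝ) := by
          gcongr
      _ = (d.choose (k+1) : ℝ) := by
          rw [div_mul_eq_mul_div, key]
          field_simp

-- L2: s^s ≤ 3^s * s!
lemma aux_fact_lower (s : ℕ) : (s:ℝ)^s ≤ 3^s * (s.factorial : ℝ) := by
  induction s with
  | zero => simp
  | succ s ih =>
    have key : ((s:ℝ)+1)^s ≤ 3 * (s:ℝ)^s := by
      rcases Nat.eq_zero_or_pos s with h0 | hs
      · subst h0; norm_num
      have hsp : (0:ℝ) < (s:ℝ) := by exact_mod_cast hs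
      have h1 : (s:ℝ)+1 = (s:ℝ) * (1 + 1/(s:ℝ)) := by field_simp
      have h2 : (1 + 1/(s:ℝ)) ≤ Real.exp (1/(s:ℝ)) := by
        have := Real.add_one_le_exp (1/(s:ℝ)); linarith
      have h3 : (1 + 1/(s:ℝ))^s ≤ Real.exp (1/(s:ℝ)) ^ s := by
        gcongr
      rw [← Real.exp_nat_mul] at h3
      have h4 : (s:ℝ) * (1/(s:ℝ)) = 1 := by field_simp
      rw [h4] at h3
      have h5 : Real.exp 1 ≤ 3 := by
        have := Real.exp_one_lt_d9; linarith
      calc ((s:ℝ)+1)^s = (s:ℝ)^s * (1+1/(s:ℝ))^s := by rw [h1, mul_pow]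
        _ ≤ (s:ℝ)^s * 3 := by
            have : (1+1/(s:ℝ))^s ≤ 3 := le_trans h3 h5
            nlinarith [pow_nonneg (le_of_lt hsp) s]
        _ = 3 * (s:ℝ)^s := by ring
    have hf : (s.factorial : ℝ) * ((s:ℝ)+1) = ((s+1).factorial : ℝ) := by
      push_cast [Nat.factorial_succ]; ring
    push_cast
    calc ((s:ℝ)+1)^(s+1) = ((s:ℝ)+1)^s * ((s:ℝ)+1) := by ring
      _ ≤ 3 * (s:ℝ)^s * ((s:ℝ)+1) := by
          gcongr
      _ ≤ 3 * (3^s * (s.factorial:ℝ)) * ((s:ℝ)+1) := by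
          gcongr
      _ = 3^(s+1) * ((s.factorial:ℝ) * ((s:ℝ)+1)) := by ring
      _ = 3^(s+1) * ((s+1).factorial : ℝ) := by rw [hf]
    
-- numeric: (s+1)^4 ≤ 10 * 7^s
lemma aux_numeric (s : ℕ) : (s+1)^4 ≤ 10 * 7^s := by
  induction s with
  | zero => norm_num
  | succ s ih =>
    rcases Nat.eq_zero_or_pos s with h0 | hs
    · subst h0; norm_num
    have h1 : 16 * (s+2)^4 ≤ 112 * (s+1)^4 := by nlinarith [sq_nonneg s, hs, sq_nonneg (s+1), pow_pos hs 4, pow_pos hs 3]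
    have : (s+2)^4 ≤ 7 * (s+1)^4 := by omega
    calc (s+1+1)^4 = (s+2)^4 := by ring_nf
      _ ≤ 7 * (s+1)^4 := this
      _ ≤ 7 * (10 * 7^s) := by omega
      _ = 10 * 7^(s+1) := by ring

lemma aux_choose_mono (n : ℕ) : ∀ s j, j ≤ s → 2*s ≤ n → n.choose j ≤ n.choose s := by
  intro s
  induction s with
  | zero => intro j hj _; simp [Nat.le_zero.mp hj]
  | succ s ih =>
    intro j hj h2
    rcases Nat.lt_or_ge j (s+1) with hlt | hge
    · refine le_trans (ih j (by omega) (by omega)) (Nat.choose_le_succ_of_lt_half_left ?_)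
      omega
    · have : j = s+1 := by omega
      subst this; rfl

lemma aux_small_powerset {α : Type*} [DecidableEq α] (A : Finset α) (s : ℕ)
    (h2 : 2*s ≤ A.card) :
    (A.powerset.filter (fun U => U.card ≤ s)).card ≤ (s+1) * A.card.choose s := by
  have hsub : A.powerset.filter (fun U => U.card ≤ s) ⊆
      (Finset.range (s+1)).biUnion (fun j => A.powersetCard j) := by
    intro U hU
    simp only [Finset.mem_filter, Finset.mem_powerset] at hU
    simp only [Finset.mem_biUnion, Finset.mem_range, Finset.mem_powersetCard]
    exact ⟨U.card, by omega, hU.1, rfl⟩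
  calc (A.powerset.filter (fun U => U.card ≤ s)).card
      ≤ ((Finset.range (s+1)).biUnion (fun j => A.powersetCard j)).card :=
        Finset.card_le_card hsub
    _ ≤ ∑ j ∈ Finset.range (s+1), (A.powersetCard j).card := Finset.card_biUnion_le
    _ = ∑ j ∈ Finset.range (s+1), A.card.choose j := by
        simp [Finset.card_powersetCard]
    _ ≤ ∑ _j ∈ Finset.range (s+1), A.card.choose s := by
        apply Finset.sum_le_sum
        intro j hj
        exact aux_choose_mono A.card s j (by simp at hj; omega) h2
    _ = (s+1) * A.card.choose s := by
        rw [Finset.sum_const, Finset.card_range]; ring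

lemma aux_ball (d k s : ℕ) (hk : 1 ≤ k) (hd : 10*k ≤ d) (hs : s = (k-1)/10)
    (A : Finset (Fin d)) (hA : A.card = k) :
    ((Finset.powersetCard k (Finset.univ : Finset (Fin d))).filter
        (fun T => 9*k+1 ≤ 10*(A ∩ T).card)).card
      ≤ ((s+1) * k.choose s) * ((s+1) * (d-k).choose s) := by
  classical
  set ball := (Finset.powersetCard k (Finset.univ : Finset (Fin d))).filter
      (fun T => 9*k+1 ≤ 10*(A ∩ T).card) with hball
  set P := (A.powerset.filter (fun U => U.card ≤ s)) ×ˢ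
      ((Finset.univ \ A).powerset.filter (fun V => V.card ≤ s)) with hP
  have hmem : ∀ T ∈ ball, T.card = k ∧ (A \ T).card ≤ s ∧ (T \ A).card ≤ s := by
    intro T hT
    rw [hball, Finset.mem_filter, Finset.mem_powersetCard] at hT
    obtain ⟨⟨_, hTcard⟩, hTbad⟩ := hT
    have h1 := Finset.card_inter_add_card_sdiff A T
    have h2 := Finset.card_inter_add_card_sdiff T A
    rw [Finset.inter_comm] at h2
    refine ⟨hTcard, by omega, by omega⟩
  have hmaps : ∀ T ∈ ball, (A \ T, T \ A) ∈ P := by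
    intro T hT
    obtain ⟨hTcard, h1, h2⟩ := hmem T hT
    rw [hP, Finset.mem_product]
    constructor
    · rw [Finset.mem_filter, Finset.mem_powerset]
      exact ⟨Finset.sdiff_subset, h1⟩
    · rw [Finset.mem_filter, Finset.mem_powerset]
      refine ⟨Finset.sdiff_subset_sdiff (Finset.subset_univ T) le_rfl, h2⟩
  have hrec : ∀ T : Finset (Fin d), T = (A \ (A \ T)) ∪ (T \ A) := by
    intro T
    ext x
    simp only [Finset.mem_union, Finset.mem_sdiff]
    tauto
  have hinj : Set.InjOn (fun T => (A \ T, T \ A)) ↑ball := by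
    intro T hT T' hT' heq
    simp only [Prod.mk.injEq] at heq
    rw [hrec T, hrec T', heq.1, heq.2]
  calc ball.card ≤ P.card := Finset.card_le_card_of_injOn _ hmaps hinj
    _ ≤ ((s+1) * k.choose s) * ((s+1) * (d-k).choose s) := by
        rw [hP, Finset.card_product]
        have c1 : (A.powerset.filter (fun U => U.card ≤ s)).card ≤ (s+1) * k.choose s := by
          have := aux_small_powerset A s (by omega)
          rwa [hA] at this
        have c2 : ((Finset.univ \ A).powerset.filter (fun V => V.card ≤ s)).card
            ≤ (s+1) * (d-k).choose s := by
          have hcard : (Finset.univ \ A).card = d - k := by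
            rw [Finset.card_sdiff_of_subset (Finset.subset_univ A), Finset.card_univ, Fintype.card_fin, hA]
          have := aux_small_powerset (Finset.univ \ A) s (by rw [hcard]; omega)
          rwa [hcard] at this
        exact Nat.mul_le_mul c1 c2

lemma aux_family (d k s : ℕ) (hk : 1 ≤ k) (hd : 10*k ≤ d) (hs : s = (k-1)/10) :
    ∃ F : Finset (Finset (Fin d)),
      (∀ A ∈ F, A.card = k) ∧
      (∀ A ∈ F, ∀ B ∈ F, A ≠ B → 10*(A ∩ B).card ≤ 9*k) ∧
      d.choose k ≤ F.card * (((s+1) * k.choose s) * ((s+1) * (d-k).choose s)) := by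
  classical
  set K := Finset.powersetCard k (Finset.univ : Finset (Fin d)) with hK
  set G := K.powerset.filter
      (fun F => ∀ A ∈ F, ∀ B ∈ F, A ≠ B → 10*(A ∩ B).card ≤ 9*k) with hG
  have hne : G.Nonempty := by
    refine ⟨∅, ?_⟩
    rw [hG, Finset.mem_filter, Finset.mem_powerset]
    exact ⟨Finset.empty_subset _, by simp⟩
  obtain ⟨F, hFG, hmax⟩ := Finset.exists_max_image G Finset.card hne
  rw [hG, Finset.mem_filter, Finset.mem_powerset] at hFG
  obtain ⟨hFK, hFpair⟩ := hFG
  have hcardmem : ∀ A ∈ K, A.card = k := by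
    intro A hA
    rw [hK, Finset.mem_powersetCard] at hA
    exact hA.2
  have cover : ∀ T ∈ K, ∃ A ∈ F, 9*k+1 ≤ 10*(A ∩ T).card := by
    intro T hT
    by_contra hcon
    push_neg at hcon
    have hTcard : T.card = k := hcardmem T hT
    have hTF : T ∉ F := by
      intro hTF
      have := hcon T hTF
      rw [Finset.inter_self, hTcard] at this
      omega
    have hins : insert T F ∈ G := by
      rw [hG, Finset.mem_filter, Finset.mem_powerset]
      refine ⟨Finset.insert_subset hT hFK, ?_⟩
      intro A hA B hB hAB
      rcases Finset.mem_insert.mp hA with rfl | hA'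
      · rcases Finset.mem_insert.mp hB with rfl | hB'
        · exact absurd rfl hAB
        · have := hcon B hB'
          rw [Finset.inter_comm]
          omega
      · rcases Finset.mem_insert.mp hB with rfl | hB'
        · have := hcon A hA'
          omega
        · exact hFpair A hA' B hB' hAB
    have := hmax _ hins
    rw [Finset.card_insert_of_notMem hTF] at this
    omega
  have cover2 : K ⊆ F.biUnion (fun A => K.filter (fun T => 9*k+1 ≤ 10*(A ∩ T).card)) := by
    intro T hT
    obtain ⟨A, hAF, hbad⟩ := cover T hT
    rw [Finset.mem_biUnion]
    exact ⟨A, hAF, Finset.mem_filter.mpr ⟨hT, hbad⟩⟩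
  refine ⟨F, fun A hA => hcardmem A (hFK hA), hFpair, ?_⟩
  have hKcard : K.card = d.choose k := by
    rw [hK, Finset.card_powersetCard, Finset.card_univ, Fintype.card_fin]
  calc d.choose k = K.card := hKcard.symm
    _ ≤ (F.biUnion (fun A => K.filter (fun T => 9*k+1 ≤ 10*(A ∩ T).card))).card :=
        Finset.card_le_card cover2
    _ ≤ ∑ A ∈ F, (K.filter (fun T => 9*k+1 ≤ 10*(A ∩ T).card)).card :=
        Finset.card_biUnion_le
    _ ≤ ∑ _A ∈ F, (((s+1) * k.choose s) * ((s+1) * (d-k).choose s)) := by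
        apply Finset.sum_le_sum
        intro A hA
        exact aux_ball d k s hk hd hs A (hcardmem A (hFK hA))
    _ = F.card * (((s+1) * k.choose s) * ((s+1) * (d-k).choose s)) := by
        rw [Finset.sum_const]; ring

lemma aux_key (d k s : ℕ) (hk : 1 ≤ k) (hd : 10*k ≤ d) (hs : s = (k-1)/10) :
    (((s+1) * (k.choose s) * ((s+1) * ((d-k).choose s)) : ℕ) : ℝ)^2 ≤ (d.choose k : ℝ) := by
  have hkd : k ≤ d := by omega
  rcases Nat.eq_zero_or_pos s with h0 | hspos
  · subst h0
    simp only [Nat.choose_zero_right]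
    norm_num
    exact_mod_cast Nat.one_le_iff_ne_zero.mpr (Nat.choose_pos hkd).ne'
  have hk11 : 11 ≤ k := by omega
  have h10s : 10*s + 1 ≤ k := by omega
  have hk20 : k ≤ 20*s := by omega
  set x : ℝ := (d:ℝ)/(k:ℝ) with hx
  have hkR : (0:ℝ) < k := by exact_mod_cast hk
  have hsR : (0:ℝ) < s := by exact_mod_cast hspos
  have hx10 : (10:ℝ) ≤ x := by
    rw [hx, le_div_iff₀ hkR]
    exact_mod_cast hd
  have hxpos : (0:ℝ) < x := by linarith
  have hfact : (0:ℝ) < (s.factorial:ℝ) := by exact_mod_cast s.factorial_pos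
  have hfact2 : (s:ℝ)^s/(3:ℝ)^s ≤ (s.factorial:ℝ) := by
    rw [div_le_iff₀ (by positivity)]
    have := aux_fact_lower s
    linarith
  have hfactpos : (0:ℝ) < (s:ℝ)^s/(3:ℝ)^s := by positivity
  -- choose bounds
  have hA : (k.choose s : ℝ) ≤ (3*(k:ℝ)/s)^s := by
    have h1 := Nat.choose_le_pow_div (α := ℝ) s k
    have h2 : ((k:ℝ))^s / (s.factorial:ℝ) ≤ ((k:ℝ))^s / ((s:ℝ)^s/(3:ℝ)^s) := by
      gcongr
    calc (k.choose s : ℝ) ≤ ((k:ℝ))^s / (s.factorial:ℝ) := by push_cast at h1 ⊢; exact h1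
      _ ≤ ((k:ℝ))^s / ((s:ℝ)^s/(3:ℝ)^s) := h2
      _ = (3*(k:ℝ)/s)^s := by
          rw [div_pow, mul_pow, div_div_eq_mul_div]; ring
  have hB : ((d-k).choose s : ℝ) ≤ (3*(d:ℝ)/s)^s := by
    have h1 := Nat.choose_le_pow_div (α := ℝ) s (d-k)
    have hdk : ((d-k:ℕ):ℝ) ≤ (d:ℝ) := by exact_mod_cast Nat.sub_le d k
    have h0 : (0:ℝ) ≤ ((d-k:ℕ):ℝ) := by positivity
    have h2 : (((d-k:ℕ)):ℝ)^s / (s.factorial:ℝ) ≤ ((d:ℝ))^s / ((s:ℝ)^s/(3:ℝ)^s) := by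
      gcongr
    calc ((d-k).choose s : ℝ) ≤ (((d-k:ℕ)):ℝ)^s / (s.factorial:ℝ) := by push_cast at h1 ⊢; exact h1
      _ ≤ ((d:ℝ))^s / ((s:ℝ)^s/(3:ℝ)^s) := h2
      _ = (3*(d:ℝ)/s)^s := by rw [div_pow, mul_pow, div_div_eq_mul_div]; ring
  have hA60 : (3*(k:ℝ)/s) ≤ 60 := by
    rw [div_le_iff₀ hsR]
    have : (k:ℝ) ≤ 20*(s:ℝ) := by exact_mod_cast hk20
    linarith
  have hB60 : (3*(d:ℝ)/s) ≤ 60*x := by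
    rw [div_le_iff₀ hsR]
    have hdxk : (d:ℝ) = x*(k:ℝ) := by rw [hx]; field_simp
    have : (k:ℝ) ≤ 20*(s:ℝ) := by exact_mod_cast hk20
    nlinarith
  have hApos : (0:ℝ) ≤ (3*(k:ℝ)/s) := by positivity
  have hBpos : (0:ℝ) ≤ (3*(d:ℝ)/s) := by positivity
  have hprod : (k.choose s : ℝ) * ((d-k).choose s : ℝ) ≤ (3600*x)^s := by
    calc (k.choose s : ℝ) * ((d-k).choose s : ℝ)
        ≤ (3*(k:ℝ)/s)^s * (3*(d:ℝ)/s)^s := by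
          apply mul_le_mul hA hB (by positivity) (by positivity)
      _ ≤ (60:ℝ)^s * (60*x)^s := by
          apply mul_le_mul (pow_le_pow_left₀ hApos hA60 s) (pow_le_pow_left₀ hBpos hB60 s) (by positivity) (by positivity)
      _ = (3600*x)^s := by rw [← mul_pow]; congr 1; ring
  -- now assemble
  have hs4 : ((s:ℝ)+1)^4 ≤ x * 7^s := by
    have h1 : ((s:ℝ)+1)^4 ≤ 10 * 7^s := by exact_mod_cast aux_numeric s
    have h7 : (0:ℝ) < 7^s := by positivity
    nlinarith
  have hchoosepos : (0:ℝ) ≤ (k.choose s : ℝ) * ((d-k).choose s : ℝ) := by positivity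
  have main : (((s:ℝ)+1) * (k.choose s) * (((s:ℝ)+1) * ((d-k).choose s)))^2 ≤ x * 7^s * ((3600*x)^s)^2 := by
    have expand : (((s:ℝ)+1) * (k.choose s) * (((s:ℝ)+1) * ((d-k).choose s)))^2
        = (((s:ℝ)+1)^4) * ((k.choose s : ℝ) * ((d-k).choose s : ℝ))^2 := by ring
    rw [expand]
    apply mul_le_mul hs4 _ (by positivity) (by positivity)
    exact pow_le_pow_left₀ hchoosepos hprod 2
  have hx8 : (10:ℝ)^8 ≤ x^8 := pow_le_pow_left₀ (by norm_num) hx10 8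
  have hb : (7:ℝ)*(3600*x)^2 ≤ x^10 := by
    nlinarith [mul_le_mul_of_nonneg_right hx8 (sq_nonneg x), sq_nonneg x]
  have hstep : x * 7^s * ((3600*x)^s)^2 ≤ x^(10*s+1) := by
    have e1 : ((3600*x)^s)^2 = ((3600*x)^2)^s := by rw [← pow_mul, ← pow_mul, Nat.mul_comm]
    have e2 : (7:ℝ)^s * ((3600*x)^2)^s = (7*(3600*x)^2)^s := (mul_pow _ _ _).symm
    have e3 : (7*(3600*x)^2)^s ≤ (x^10)^s := pow_le_pow_left₀ (by positivity) hb s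
    calc x * 7^s * ((3600*x)^s)^2 = x * ((7:ℝ)^s * ((3600*x)^2)^s) := by rw [e1]; ring
      _ ≤ x * (x^10)^s := by rw [e2]; exact mul_le_mul_of_nonneg_left e3 (le_of_lt hxpos)
      _ = x^(10*s+1) := by rw [← pow_mul, pow_succ]; ring
  have hfin : x^(10*s+1) ≤ (d.choose k : ℝ) := by
    calc x^(10*s+1) ≤ x^k := pow_le_pow_right₀ (by linarith) h10s
      _ ≤ (d.choose k : ℝ) := aux_pow_le_choose k d hkd
  push_cast
  calc (((s:ℝ)+1) * (k.choose s) * (((s:ℝ)+1) * ((d-k).choose s)))^2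
      ≤ x * 7^s * ((3600*x)^s)^2 := main
    _ ≤ x^(10*s+1) := hstep
    _ ≤ (d.choose k : ℝ) := hfin

/-- A large family of unit vectors of the form `a/v0`, `a ∈ {0,1}^d` of Hamming weight
`v0²`, with `ℓ₁` norm `v0` and pairwise inner products of magnitude at most `9/10`. -/
theorem near_orthogonal_family (d v0 : ℕ) (hd : 10 ≤ d) (hv0 : 0 < v0)
    (hsq : (v0 : ℝ) ^ 2 ≤ (d : ℝ) / 10) (v1 : ℝ) (hv1 : 0 < v1) :
    ∃ B : Finset (Fin d → ℝ),
      Real.sqrt (Nat.choose d (v0 ^ 2)) ≤ (B.card : ℝ) ∧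
      (∀ θ ∈ B, Real.sqrt (∑ j, θ j ^ 2) = 1) ∧
      (∀ θ ∈ B, ∑ j, |θ j| = (v0 : ℝ)) ∧
      (∀ θ ∈ B, ∀ θ' ∈ B, θ ≠ θ' → |∑ j, θ j * θ' j| ≤ 9 / 10) ∧
      (∀ θ ∈ B, ∃ a : Fin d → ℝ, (∀ j, a j = 0 ∨ a j = 1) ∧
        (∑ j, a j = (v0 : ℝ) ^ 2) ∧ θ = fun j => a j / v0) := by
  classical
  set k := v0^2 with hkdef
  have hk1 : 1 ≤ k := Nat.one_le_iff_ne_zero.mpr (pow_ne_zero 2 hv0.ne')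
  have hdk : 10*k ≤ d := by
    have h10 : (10:ℝ) * (v0:ℝ)^2 ≤ (d:ℝ) := by linarith
    have : ((10 * v0^2 : ℕ) : ℝ) ≤ ((d:ℕ):ℝ) := by push_cast; linarith
    exact_mod_cast this
  set s := (k-1)/10 with hsdef
  obtain ⟨F, hFcard, hFpair, hFcount⟩ := aux_family d k s hk1 hdk rfl
  set Bad := ((s+1) * k.choose s) * ((s+1) * (d-k).choose s) with hBad
  have hkey := aux_key d k s hk1 hdk rfl
  have hv0R : (0:ℝ) < (v0:ℝ) := by exact_mod_cast hv0
  have hkR : ((k:ℕ):ℝ) = (v0:ℝ)^2 := by rw [hkdef]; push_cast; ring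
  -- sqrt bound
  have hNpos : (0:ℝ) < (d.choose k : ℝ) := by
    exact_mod_cast Nat.choose_pos (by omega : k ≤ d)
  have hsqrtpos : 0 < Real.sqrt (d.choose k) := Real.sqrt_pos.mpr hNpos
  have hBadle : (Bad:ℝ) ≤ Real.sqrt (d.choose k) := by
    rw [show (Bad:ℝ) = Real.sqrt ((Bad:ℝ)^2) from (Real.sqrt_sq (Nat.cast_nonneg _)).symm]
    exact Real.sqrt_le_sqrt hkey
  have hcount : (d.choose k : ℝ) ≤ (F.card : ℝ) * (Bad : ℝ) := by exact_mod_cast hFcount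
  have hsqrtF : Real.sqrt (d.choose k) ≤ (F.card : ℝ) := by
    have hmul : Real.sqrt (d.choose k) * Real.sqrt (d.choose k) = (d.choose k : ℝ) :=
      Real.mul_self_sqrt (le_of_lt hNpos)
    have h2 : (F.card : ℝ) * (Bad : ℝ) ≤ (F.card : ℝ) * Real.sqrt (d.choose k) :=
      mul_le_mul_of_nonneg_left hBadle (Nat.cast_nonneg _)
    have h3 : Real.sqrt (d.choose k) * Real.sqrt (d.choose k)
        ≤ (F.card : ℝ) * Real.sqrt (d.choose k) := by
      rw [hmul]; linarith
    exact le_of_mul_le_mul_right h3 hsqrtpos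
  -- vectors
  set f : Finset (Fin d) → (Fin d → ℝ) := fun A j => if j ∈ A then ((v0:ℝ))⁻¹ else 0 with hf
  have hinj : Set.InjOn f ↑F := by
    intro A _ A' _ heq
    ext x
    have hx := congrFun heq x
    by_cases h1 : x ∈ A <;> by_cases h2 : x ∈ A' <;>
      simp only [hf, h1, h2, if_true, if_false] at hx <;>
      first
        | tauto
        | exact absurd hx (by positivity)
        | exact absurd hx.symm (by positivity)
  refine ⟨F.image f, ?_, ?_, ?_, ?_, ?_⟩
  · rw [Finset.card_image_of_injOn hinj]
    exact hsqrtF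
  · -- ℓ2 norm
    intro θ hθ
    obtain ⟨A, hAF, rfl⟩ := Finset.mem_image.mp hθ
    have hsum : ∑ j, (f A j)^2 = (A.card : ℝ) * ((v0:ℝ)⁻¹)^2 := by
      calc ∑ j, (f A j)^2 = ∑ j, (if j ∈ A then ((v0:ℝ)⁻¹)^2 else 0) := by
            apply Finset.sum_congr rfl
            intro j _
            by_cases h : j ∈ A <;> simp [hf, h]
        _ = ∑ j ∈ Finset.univ ∩ A, ((v0:ℝ)⁻¹)^2 := Finset.sum_ite_mem _ _ _
        _ = (A.card : ℝ) * ((v0:ℝ)⁻¹)^2 := by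
            rw [Finset.univ_inter, Finset.sum_const, nsmul_eq_mul]
    rw [hsum, hFcard A hAF, hkR]
    rw [show (v0:ℝ)^2 * ((v0:ℝ)⁻¹)^2 = 1 by field_simp]
    exact Real.sqrt_one
  · -- ℓ1 norm
    intro θ hθ
    obtain ⟨A, hAF, rfl⟩ := Finset.mem_image.mp hθ
    calc ∑ j, |f A j| = ∑ j, (if j ∈ A then ((v0:ℝ)⁻¹) else 0) := by
          apply Finset.sum_congr rfl
          intro j _
          by_cases h : j ∈ A <;> simp [hf, h, abs_of_nonneg, le_of_lt hv0R]
      _ = ∑ j ∈ Finset.univ ∩ A, ((v0:ℝ)⁻¹) := Finset.sum_ite_mem _ _ _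
      _ = (A.card : ℝ) * ((v0:ℝ)⁻¹) := by
          rw [Finset.univ_inter, Finset.sum_const, nsmul_eq_mul]
      _ = (v0:ℝ) := by
          rw [hFcard A hAF, hkR]; field_simp
  · -- inner products
    intro θ hθ θ' hθ' hne
    obtain ⟨A, hAF, rfl⟩ := Finset.mem_image.mp hθ
    obtain ⟨A', hA'F, rfl⟩ := Finset.mem_image.mp hθ'
    have hAA' : A ≠ A' := fun h => hne (by rw [h])
    have hsum : ∑ j, f A j * f A' j = ((A ∩ A').card : ℝ) * ((v0:ℝ)⁻¹)^2 := by
      calc ∑ j, f A j * f A' j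
          = ∑ j, (if j ∈ A ∩ A' then ((v0:ℝ)⁻¹)^2 else 0) := by
            apply Finset.sum_congr rfl
            intro j _
            by_cases h1 : j ∈ A <;> by_cases h2 : j ∈ A' <;>
              simp [hf, h1, h2, Finset.mem_inter, pow_two]
        _ = ∑ j ∈ Finset.univ ∩ (A ∩ A'), ((v0:ℝ)⁻¹)^2 := Finset.sum_ite_mem _ _ _
        _ = ((A ∩ A').card : ℝ) * ((v0:ℝ)⁻¹)^2 := by
            rw [Finset.univ_inter, Finset.sum_const, nsmul_eq_mul]
    rw [hsum, abs_of_nonneg (by positivity)]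
    have hb : 10*(A ∩ A').card ≤ 9*k := hFpair A hAF A' hA'F hAA'
    have hbR : 10*((A ∩ A').card : ℝ) ≤ 9*(v0:ℝ)^2 := by
      rw [← hkR]; exact_mod_cast hb
    rw [show ((A ∩ A').card : ℝ) * ((v0:ℝ)⁻¹)^2 = ((A ∩ A').card : ℝ) / ((v0:ℝ)^2) by
      field_simp]
    rw [div_le_div_iff₀ (by positivity) (by norm_num)]
    linarith
  · -- representation
    intro θ hθ
    obtain ⟨A, hAF, rfl⟩ := Finset.mem_image.mp hθ
    refine ⟨fun j => if j ∈ A then 1 else 0, ?_, ?_, ?_⟩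
    · intro j; by_cases h : j ∈ A <;> simp [h]
    · calc ∑ j, (if j ∈ A then (1:ℝ) else 0) = ∑ j ∈ Finset.univ ∩ A, (1:ℝ) :=
            Finset.sum_ite_mem _ _ _
        _ = (A.card : ℝ) := by rw [Finset.univ_inter, Finset.sum_const, nsmul_eq_mul, mul_one]
        _ = (v0:ℝ)^2 := by rw [hFcard A hAF, hkR]
    · funext j
      by_cases h : j ∈ A <;> simp [hf, h, one_div]
end

section
/- Let v0 be a positive integer and v1 > 0, and let d be a positive integer. Then F_{v0, v1, φ} ⊆ F_{1, √2·π·v0·v1, sgn}, where φ(z) = √2 sin(πz) and sgn(z) = 1 if z > 0 and −1 otherwise. That is, every function on [-1,1]^d in the closed ℓ₁-hull of sinusoidal ridge functions with inner ℓ₁ norm at most v0 and outer ℓ₁ norm at most v1 lies in the closed ℓ₁-hull of signum ridge functions with inner ℓ₁ norm at most 1 and outer ℓ₁ norm at most √2·π·v0·v1. -/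
open MeasureTheory ProbabilityTheory Real ENNReal

noncomputable section

/-- The cube `B = [-1,1]^d`. -/
def cube (d : ℕ) : Set (Fin d → ℝ) := Set.univ.pi fun _ => Set.Icc (-1 : ℝ) 1

/-- `F_{v0,v1,φ}`: the closure in sup norm on the cube `[-1,1]^d` of the set of finite
ridge combinations `x ↦ ∑ₖ cₖ φ(θₖ·x − bₖ)` with `‖θₖ‖₁ ≤ v0` and `∑ₖ |cₖ| ≤ v1`. -/
def RidgeClass (d : ℕ) (φ : ℝ → ℝ) (v0 v1 : ℝ) : Set ((Fin d → ℝ) → ℝ) :=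
  {f | ∀ ε > 0, ∃ (m : ℕ) (c : Fin m → ℝ) (θ : Fin m → Fin d → ℝ) (b : Fin m → ℝ),
    (∀ k, ∑ j, |θ k j| ≤ v0) ∧ (∑ k, |c k| ≤ v1) ∧
    ∀ x ∈ cube d, |f x - ∑ k, c k * φ ((∑ j, θ k j * x j) - b k)| ≤ ε}

lemma sgn_div_of_pos {c : ℝ} (hc : 0 < c) (z : ℝ) : sgn (z / c) = sgn z := by
  have h : 0 < z / c ↔ 0 < z := by
    constructor
    · intro h
      by_contra hz
      push_neg at hz
      have : z / c ≤ 0 := div_nonpos_of_nonpos_of_nonneg hz hc.le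
      linarith
    · intro h; exact div_pos h hc
  simp only [sgn, h]

lemma abs_sin_sub_sin_le (a b : ℝ) : |Real.sin a - Real.sin b| ≤ |a - b| := by
  rw [Real.sin_sub_sin, abs_mul, abs_mul]
  have h1 : |Real.sin ((a - b) / 2)| ≤ |(a - b) / 2| := Real.abs_sin_le_abs
  have h2 : |Real.cos ((a + b) / 2)| ≤ 1 := Real.abs_cos_le_one _
  calc |2| * |Real.sin ((a - b) / 2)| * |Real.cos ((a + b) / 2)|
      ≤ |2| * |(a - b) / 2| * 1 := by
        apply mul_le_mul (mul_le_mul le_rfl h1 (abs_nonneg _) (abs_nonneg _)) h2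
          (abs_nonneg _) (by positivity)
    _ = |a - b| := by
        rw [abs_div, abs_of_nonneg (by norm_num : (0:ℝ) ≤ (2:ℝ))]
        ring

set_option maxHeartbeats 1600000 in
lemma sine_approx (v0 : ℕ) (hv0 : 1 ≤ v0) (b δ : ℝ) (hδ : 0 < δ) :
    ∃ (K : ℕ) (w T : Fin K → ℝ),
      (∑ i, |w i| ≤ Real.sqrt 2 * π * v0) ∧
      ∀ u : ℝ, |u| ≤ (v0 : ℝ) →
        |Real.sqrt 2 * Real.sin (π * (u - b)) - ∑ i, w i * sgn (u - T i)| ≤ δ := by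
  -- choose M
  obtain ⟨M, hM⟩ := exists_nat_gt (Real.sqrt 2 * π / (4 * δ))
  have hsqrt2 : (0:ℝ) < Real.sqrt 2 := by positivity
  have hMpos : 0 < (M : ℝ) := lt_of_le_of_lt (by positivity) hM
  have hM0 : (M : ℝ) ≠ 0 := ne_of_gt hMpos
  have hMδ : Real.sqrt 2 * π / (4 * M) ≤ δ := by
    rw [div_le_iff₀ (by positivity)]
    rw [div_lt_iff₀ (by positivity)] at hM
    nlinarith [Real.pi_pos]
  set P : ℕ := 2 * v0 + 1 with hP
  set K : ℕ := 2 * M * P with hK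
  set h : ℝ := 1 / (2 * M) with hh
  have hhpos : 0 < h := by positivity
  have hMh : (M : ℝ) * h = 1 / 2 := by rw [hh]; field_simp
  have hpiMh : π * (M : ℝ) * h = π / 2 := by rw [mul_assoc, hMh]; ring
  have hKh : (K : ℝ) * h = (P : ℝ) := by
    rw [hK, hh]; push_cast; field_simp
  set n : ℤ := ⌈b⌉ + v0 with hn
  set L : ℝ := b - n with hL
  have hL1 : L ≤ -(v0 : ℝ) := by
    have := Int.le_ceil b
    simp only [hL, hn]
    push_cast
    linarith
  have hL2 : -(v0 : ℝ) - 1 < L := by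
    have := Int.ceil_lt_add_one b
    simp only [hL, hn]
    push_cast
    linarith
  -- grid functions
  set S : ℕ → ℝ := fun i => Real.sin (π * i * h) with hS
  set C : ℕ → ℝ := fun i => Real.cos (π * i * h) with hC
  set F : ℕ → ℝ := fun i => |S (i + 1) - S i| with hF
  set G : ℕ → ℝ := fun i => Real.sqrt 2 * Real.sin (π * (L + i * h - b)) with hG
  set e : ℝ := (-1 : ℝ) ^ (-n) with he
  have habse : |e| = 1 := abs_neg_one_zpow _
  have hGeq : ∀ i : ℕ, G i = Real.sqrt 2 * e * S i := by
    intro i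
    have harg : π * (L + i * h - b) = π * i * h + (-n : ℤ) * π := by
      simp only [hL]
      push_cast
      ring
    simp only [hG, hS, harg, Real.sin_add_int_mul_pi, he]
    ring
  have hwF : ∀ i : ℕ, |(G (i + 1) - G i) / 2| = Real.sqrt 2 * F i / 2 := by
    intro i
    have h1 : G (i + 1) - G i = Real.sqrt 2 * e * (S (i + 1) - S i) := by
      rw [hGeq, hGeq]; ring
    rw [h1, abs_div, abs_mul, abs_mul, habse,
      abs_of_nonneg hsqrt2.le,
      abs_of_nonneg (by norm_num : (0:ℝ) ≤ (2:ℝ))]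
    simp only [hF]
    ring
  -- arguments up to index ≤ M lie in [0, π/2]
  have hargle : ∀ i : ℕ, i ≤ M → π * (i : ℝ) * h ≤ π / 2 := by
    intro i hi
    have hi' : (i : ℝ) ≤ M := by exact_mod_cast hi
    calc π * (i : ℝ) * h ≤ π * (M : ℝ) * h := by
          apply mul_le_mul_of_nonneg_right _ hhpos.le
          exact mul_le_mul_of_nonneg_left hi' Real.pi_pos.le
      _ = π / 2 := hpiMh
  have hargnn : ∀ i : ℕ, (0:ℝ) ≤ π * (i : ℝ) * h := fun i => by positivity
  -- block sum
  have hblock : ∑ i ∈ Finset.range (2 * M), F i = 2 := by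
    have h2M : 2 * M = M + M := by ring
    rw [h2M, Finset.sum_range_add]
    have hfirst : ∑ i ∈ Finset.range M, F i = 1 := by
      have hc : ∀ i ∈ Finset.range M, F i = S (i + 1) - S i := by
        intro i hi
        rw [Finset.mem_range] at hi
        simp only [hF]
        rw [abs_of_nonneg]
        rw [sub_nonneg]
        simp only [hS]
        apply Real.sin_le_sin_of_le_of_le_pi_div_two
        · linarith [hargnn i, Real.pi_pos]
        · exact_mod_cast hargle (i + 1) hi
        · push_cast
          nlinarith [Real.pi_pos, hhpos]
      rw [Finset.sum_congr rfl hc, Finset.sum_range_sub S M]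
      have hSM : S M = 1 := by
        simp only [hS]
        rw [hpiMh, Real.sin_pi_div_two]
      have hS0 : S 0 = 0 := by simp [hS]
      rw [hSM, hS0]
      norm_num
    have hsecond : ∑ i ∈ Finset.range M, F (M + i) = 1 := by
      have key : ∀ i : ℕ, S (M + i) = C i := by
        intro i
        have harg2 : π * ((M + i : ℕ) : ℝ) * h = π * i * h + π / 2 := by
          push_cast
          nlinarith [hpiMh]
        simp only [hS, hC]
        rw [harg2, Real.sin_add_pi_div_two]
      have hc : ∀ i ∈ Finset.range M, F (M + i) = C i - C (i + 1) := by
        intro i hi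
        rw [Finset.mem_range] at hi
        simp only [hF]
        rw [show M + i + 1 = M + (i + 1) by ring, key, key, abs_sub_comm, abs_of_nonneg]
        rw [sub_nonneg]
        simp only [hC]
        apply Real.cos_le_cos_of_nonneg_of_le_pi
        · exact hargnn i
        · linarith [hargle (i + 1) hi, Real.pi_pos]
        · push_cast
          nlinarith [Real.pi_pos, hhpos]
      rw [Finset.sum_congr rfl hc, Finset.sum_range_sub' C M]
      have hCM : C M = 0 := by
        simp only [hC]
        rw [hpiMh, Real.cos_pi_div_two]
      have hC0 : C 0 = 1 := by simp [hC]
      rw [hCM, hC0]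
      norm_num
    rw [hfirst, hsecond]
    norm_num
  -- periodicity
  have hSper : ∀ (j l : ℕ), S (2 * M * j + l) = (-1 : ℝ) ^ (j : ℤ) * S l := by
    intro j l
    have harg3 : π * ((2 * M * j + l : ℕ) : ℝ) * h = π * l * h + (j : ℤ) * π := by
      push_cast
      rw [hh]
      field_simp
      ring
    simp only [hS]
    rw [harg3, Real.sin_add_int_mul_pi]
  have hper : ∀ (j i : ℕ), F (2 * M * j + i) = F i := by
    intro j i
    simp only [hF]
    rw [show 2 * M * j + i + 1 = 2 * M * j + (i + 1) by ring, hSper, hSper,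
      ← mul_sub, abs_mul, abs_neg_one_zpow, one_mul]
  -- total sum
  have htotal : ∀ p : ℕ, ∑ i ∈ Finset.range (2 * M * p), F i = 2 * (p : ℝ) := by
    intro p
    induction p with
    | zero => simp
    | succ q ih =>
      have hsplit : 2 * M * (q + 1) = 2 * M * q + 2 * M := by ring
      rw [hsplit, Finset.sum_range_add, ih]
      have hc : ∀ i ∈ Finset.range (2 * M), F (2 * M * q + i) = F i :=
        fun i _ => hper q i
      rw [Finset.sum_congr rfl hc, hblock]
      push_cast
      ring
  -- define w, T
  set w : ℕ → ℝ := fun i => (G (i + 1) - G i) / 2 with hw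
  set T : ℕ → ℝ := fun i => L + ((i : ℝ) + 1 / 2) * h with hT
  have hG0 : G 0 = 0 := by
    rw [hGeq]
    have : S 0 = 0 := by simp [hS]
    rw [this, mul_zero]
  have hGK : G K = 0 := by
    rw [hGeq]
    have : S K = 0 := by
      simp only [hS]
      have : π * (K : ℝ) * h = (P : ℤ) * π := by
        rw [mul_assoc, hKh]
        push_cast
        ring
      rw [this, Real.sin_int_mul_pi]
    rw [this, mul_zero]
  refine ⟨K, fun i => w i, fun i => T i, ?_, ?_⟩
  · -- coefficient bound
    rw [Fin.sum_univ_eq_sum_range (fun i => |w i|) K]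
    have hsum : ∑ i ∈ Finset.range K, |w i| = Real.sqrt 2 / 2 * ∑ i ∈ Finset.range K, F i := by
      rw [Finset.mul_sum]
      apply Finset.sum_congr rfl
      intro i _
      simp only [hw]
      rw [hwF i]
      ring
    rw [hsum, hK, htotal P]
    have hv0' : (1:ℝ) ≤ v0 := by exact_mod_cast hv0
    have hPc : ((P : ℕ) : ℝ) = 2 * (v0 : ℝ) + 1 := by rw [hP]; push_cast; ring
    rw [hPc]
    have h1 : (2 * (v0:ℝ) + 1) ≤ π * v0 := by nlinarith [Real.pi_gt_three]
    calc Real.sqrt 2 / 2 * (2 * (2 * (v0:ℝ) + 1)) = Real.sqrt 2 * (2 * (v0:ℝ) + 1) := by ring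
      _ ≤ Real.sqrt 2 * (π * v0) := mul_le_mul_of_nonneg_left h1 hsqrt2.le
      _ = Real.sqrt 2 * π * v0 := by ring
  · -- pointwise bound
    intro u hu
    have huv := abs_le.1 hu
    have hLu : L ≤ u := le_trans hL1 huv.1
    have huL : u - L < 2 * (v0:ℝ) + 1 := by linarith [huv.2, hL2]
    have huLnn : 0 ≤ u - L := by linarith
    obtain ⟨q, hq⟩ : ∃ q : ℝ, q = (u - L) / h - 1 / 2 := ⟨_, rfl⟩
    have hu' : u = L + (q + 1 / 2) * h := by
      rw [hq]
      field_simp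
      ring
    obtain ⟨k, hk⟩ : ∃ k : ℕ, k = ⌈q⌉.toNat := ⟨_, rfl⟩
    have hqK : q ≤ (K : ℝ) := by
      have : (u - L) / h < K := by
        rw [div_lt_iff₀ hhpos, hKh, hP]
        push_cast
        linarith
      rw [hq]
      linarith
    have hkK : k ≤ K := by
      rw [hk, Int.toNat_le]
      exact Int.ceil_le.2 (by exact_mod_cast hqK)
    have hiff : ∀ i : ℕ, (T i < u ↔ i < k) := by
      intro i
      rw [hk, Int.lt_toNat, Int.lt_ceil]
      conv_lhs => rw [hu']
      simp only [hT]
      rw [_root_.add_lt_add_iff_left, mul_lt_mul_iff_left₀ hhpos, add_lt_add_iff_right]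
      constructor
      · intro h1; exact_mod_cast h1
      · intro h1; exact_mod_cast h1
    -- evaluate the sum
    have hsum : ∑ i : Fin K, w i * sgn (u - T i) = G k := by
      rw [Fin.sum_univ_eq_sum_range (fun i => w i * sgn (u - T i)) K]
      have step : ∀ i ∈ Finset.range K, w i * sgn (u - T i)
          = (if i < k then 2 * w i else 0) - w i := by
        intro i _
        simp only [sgn]
        by_cases hcond : T i < u
        · rw [if_pos (sub_pos.2 hcond), if_pos ((hiff i).1 hcond)]
          ring
        · rw [if_neg (fun hcc => hcond (sub_pos.1 hcc)),
            if_neg (fun hcc => hcond ((hiff i).2 hcc))]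
          ring
      rw [Finset.sum_congr rfl step, Finset.sum_sub_distrib]
      have hsub : ∑ i ∈ Finset.range K, (if i < k then 2 * w i else 0)
          = ∑ i ∈ Finset.range k, 2 * w i := by
        rw [← Finset.sum_subset (Finset.range_subset_range.2 hkK)]
        · apply Finset.sum_congr rfl
          intro i hi
          rw [Finset.mem_range] at hi
          rw [if_pos hi]
        · intro i _ hi
          rw [Finset.mem_range] at hi
          rw [if_neg hi]
      rw [hsub]
      have tel1 : ∑ i ∈ Finset.range k, 2 * w i = G k - G 0 := by
        have hc : ∀ i ∈ Finset.range k, 2 * w i = G (i + 1) - G i := by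
          intro i _
          simp only [hw]
          ring
        rw [Finset.sum_congr rfl hc, Finset.sum_range_sub G k]
      have tel2 : ∑ i ∈ Finset.range K, w i = (G K - G 0) / 2 := by
        have hc : ∀ i ∈ Finset.range K, w i = (G (i + 1) - G i) / 2 := fun i _ => rfl
        rw [Finset.sum_congr rfl hc, ← Finset.sum_div, Finset.sum_range_sub G K]
      rw [tel1, tel2, hG0, hGK]
      ring
    rw [hsum]
    -- distance bound
    have hkey : |u - (L + (k : ℝ) * h)| ≤ h / 2 := by
      by_cases hcq : ⌈q⌉ ≤ 0
      · have hk0 : k = 0 := by rw [hk, Int.toNat_of_nonpos hcq]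
        have hq0 : q ≤ 0 := le_trans (Int.le_ceil q) (by exact_mod_cast hcq)
        rw [hk0]
        push_cast
        rw [abs_le]
        constructor
        · nlinarith [huLnn, hhpos.le]
        · nlinarith [mul_nonneg (neg_nonneg.2 hq0) hhpos.le]
      · push_neg at hcq
        have hkq : (k : ℝ) = (⌈q⌉ : ℝ) := by
          rw [hk]
          exact_mod_cast Int.toNat_of_nonneg hcq.le
        have h1 : q ≤ (k : ℝ) := by rw [hkq]; exact_mod_cast Int.le_ceil q
        have h2 : (k : ℝ) < q + 1 := by
          rw [hkq]
          exact_mod_cast Int.ceil_lt_add_one q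
        rw [abs_le]
        constructor
        · nlinarith [mul_pos (show (0:ℝ) < q + 1 - k by linarith) hhpos]
        · nlinarith [mul_nonneg (sub_nonneg.2 h1) hhpos.le]
    have hGk : G k = Real.sqrt 2 * Real.sin (π * (L + (k : ℝ) * h - b)) := rfl
    rw [hGk, ← mul_sub, abs_mul, abs_of_nonneg hsqrt2.le]
    have hsin : |Real.sin (π * (u - b)) - Real.sin (π * (L + (k : ℝ) * h - b))|
        ≤ π * (h / 2) := by
      refine le_trans (_root_.abs_sin_sub_sin_le _ _) ?_
      have harg4 : π * (u - b) - π * (L + (k : ℝ) * h - b) = π * (u - (L + (k : ℝ) * h)) := by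
        ring
      rw [harg4, abs_mul, abs_of_nonneg Real.pi_pos.le]
      exact mul_le_mul_of_nonneg_left hkey Real.pi_pos.le
    calc Real.sqrt 2 * |Real.sin (π * (u - b)) - Real.sin (π * (L + (k : ℝ) * h - b))|
        ≤ Real.sqrt 2 * (π * (h / 2)) := mul_le_mul_of_nonneg_left hsin hsqrt2.le
      _ = Real.sqrt 2 * π / (4 * M) := by rw [hh]; field_simp; ring
      _ ≤ δ := hMδ
/-- Inclusion of the sinusoidal class in the signum class:
`F_{v0, v1, √2 sin(π·)} ⊆ F_{1, √2·π·v0·v1, sgn}`. -/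
theorem sine_class_subset_sgn_class (d v0 : ℕ) (hd : 0 < d) (hv0 : 0 < v0)
    (v1 : ℝ) (hv1 : 0 < v1) :
    RidgeClass d (fun z => Real.sqrt 2 * Real.sin (π * z)) v0 v1 ⊆
      RidgeClass d sgn 1 (Real.sqrt 2 * π * v0 * v1) := by
  intro f hf ε hε
  obtain ⟨m, c, θ, bb, hθ, hc, happ⟩ := hf (ε / 2) (by linarith)
  have hδ : 0 < ε / (2 * v1) := by positivity
  choose K w T hwsum hwapp using fun k : Fin m =>
    sine_approx v0 hv0 (bb k) (ε / (2 * v1)) hδ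
  set s : Fin m → ℝ := fun k => max (∑ j, |θ k j|) 1 with hs
  have hs1 : ∀ k, 1 ≤ s k := fun k => le_max_right _ _
  have hspos : ∀ k, 0 < s k := fun k => lt_of_lt_of_le one_pos (hs1 k)
  obtain ⟨N, ⟨e⟩⟩ : ∃ N : ℕ, Nonempty (Fin N ≃ (k : Fin m) × Fin (K k)) :=
    ⟨_, ⟨(Fintype.equivFin _).symm⟩⟩
  refine ⟨N, fun i => c (e i).1 * w (e i).1 (e i).2,
    fun i j => θ (e i).1 j / s (e i).1,
    fun i => T (e i).1 (e i).2 / s (e i).1, ?_, ?_, ?_⟩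
  · intro i
    show ∑ j, |θ (e i).1 j / s (e i).1| ≤ 1
    have hdiv : ∑ j, |θ (e i).1 j / s (e i).1| = (∑ j, |θ (e i).1 j|) / s (e i).1 := by
      rw [Finset.sum_div]
      apply Finset.sum_congr rfl
      intro j _
      rw [abs_div, abs_of_pos (hspos _)]
    rw [hdiv, div_le_one (hspos _)]
    exact le_max_left _ _
  · show ∑ i : Fin N, |c (e i).1 * w (e i).1 (e i).2| ≤ Real.sqrt 2 * π * v0 * v1
    have h1 : ∑ i : Fin N, |c (e i).1 * w (e i).1 (e i).2|
        = ∑ p : (k : Fin m) × Fin (K k), |c p.1 * w p.1 p.2| :=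
      Equiv.sum_comp e (fun p => |c p.1 * w p.1 p.2|)
    have h2 : ∑ p : (k : Fin m) × Fin (K k), |c p.1 * w p.1 p.2|
        = ∑ k : Fin m, ∑ j : Fin (K k), |c k * w k j| := by
      rw [← Finset.univ_sigma_univ, Finset.sum_sigma]
    rw [h1, h2]
    calc ∑ k : Fin m, ∑ j : Fin (K k), |c k * w k j|
        = ∑ k : Fin m, |c k| * ∑ j : Fin (K k), |w k j| := by
          apply Finset.sum_congr rfl
          intro k _
          rw [Finset.mul_sum]
          apply Finset.sum_congr rfl
          intro j _
          rw [abs_mul]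
      _ ≤ ∑ k : Fin m, |c k| * (Real.sqrt 2 * π * v0) := by
          apply Finset.sum_le_sum
          intro k _
          exact mul_le_mul_of_nonneg_left (hwsum k) (abs_nonneg _)
      _ = (∑ k, |c k|) * (Real.sqrt 2 * π * v0) := by rw [← Finset.sum_mul]
      _ ≤ v1 * (Real.sqrt 2 * π * v0) := by
          apply mul_le_mul_of_nonneg_right hc
          positivity
      _ = Real.sqrt 2 * π * v0 * v1 := by ring
  · intro x hx
    show |f x - ∑ i : Fin N, c (e i).1 * w (e i).1 (e i).2 *
        sgn ((∑ j, θ (e i).1 j / s (e i).1 * x j) - T (e i).1 (e i).2 / s (e i).1)| ≤ ε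
    have hxj : ∀ j, x j ∈ Set.Icc (-1:ℝ) 1 := fun j => Set.mem_univ_pi.1 hx j
    have hum : ∀ k : Fin m, |∑ j, θ k j * x j| ≤ (v0 : ℝ) := by
      intro k
      calc |∑ j, θ k j * x j| ≤ ∑ j, |θ k j * x j| := Finset.abs_sum_le_sum_abs _ _
        _ ≤ ∑ j, |θ k j| := by
            apply Finset.sum_le_sum
            intro j _
            rw [abs_mul]
            have hxa : |x j| ≤ 1 := abs_le.2 ⟨(hxj j).1, (hxj j).2⟩
            nlinarith [abs_nonneg (θ k j)]
        _ ≤ v0 := hθ k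
    have hsgn : ∀ (k : Fin m) (j : Fin (K k)),
        sgn ((∑ jd, θ k jd / s k * x jd) - T k j / s k)
          = sgn ((∑ jd, θ k jd * x jd) - T k j) := by
      intro k j
      have harg : (∑ jd, θ k jd / s k * x jd) - T k j / s k
          = ((∑ jd, θ k jd * x jd) - T k j) / s k := by
        rw [sub_div, Finset.sum_div]
        congr 1
        apply Finset.sum_congr rfl
        intro jd _
        ring
      rw [harg, sgn_div_of_pos (hspos k)]
    have hsum2 : ∑ i : Fin N, c (e i).1 * w (e i).1 (e i).2 *
          sgn ((∑ j, θ (e i).1 j / s (e i).1 * x j) - T (e i).1 (e i).2 / s (e i).1)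
        = ∑ k : Fin m, c k * ∑ j : Fin (K k), w k j *
            sgn ((∑ jd, θ k jd * x jd) - T k j) := by
      have h1 : ∑ i : Fin N, c (e i).1 * w (e i).1 (e i).2 *
            sgn ((∑ j, θ (e i).1 j / s (e i).1 * x j) - T (e i).1 (e i).2 / s (e i).1)
          = ∑ p : (k : Fin m) × Fin (K k), c p.1 * w p.1 p.2 *
              sgn ((∑ j, θ p.1 j / s p.1 * x j) - T p.1 p.2 / s p.1) :=
        Equiv.sum_comp e (fun p => c p.1 * w p.1 p.2 *
          sgn ((∑ j, θ p.1 j / s p.1 * x j) - T p.1 p.2 / s p.1))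
      rw [h1, ← Finset.univ_sigma_univ, Finset.sum_sigma]
      apply Finset.sum_congr rfl
      intro k _
      rw [Finset.mul_sum]
      apply Finset.sum_congr rfl
      intro j _
      rw [hsgn k j]
      ring
    rw [hsum2]
    have hA : |f x - ∑ k : Fin m, c k *
        (Real.sqrt 2 * Real.sin (π * ((∑ jd, θ k jd * x jd) - bb k)))| ≤ ε / 2 := happ x hx
    have hmid : ∀ k : Fin m,
        |Real.sqrt 2 * Real.sin (π * ((∑ jd, θ k jd * x jd) - bb k))
          - ∑ j : Fin (K k), w k j * sgn ((∑ jd, θ k jd * x jd) - T k j)| ≤ ε / (2 * v1) :=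
      fun k => hwapp k _ (hum k)
    have hB : |∑ k : Fin m, c k *
        (Real.sqrt 2 * Real.sin (π * ((∑ jd, θ k jd * x jd) - bb k))
          - ∑ j : Fin (K k), w k j * sgn ((∑ jd, θ k jd * x jd) - T k j))| ≤ ε / 2 := by
      calc |∑ k : Fin m, c k *
          (Real.sqrt 2 * Real.sin (π * ((∑ jd, θ k jd * x jd) - bb k))
            - ∑ j : Fin (K k), w k j * sgn ((∑ jd, θ k jd * x jd) - T k j))|
          ≤ ∑ k : Fin m, |c k *
            (Real.sqrt 2 * Real.sin (π * ((∑ jd, θ k jd * x jd) - bb k))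
              - ∑ j : Fin (K k), w k j * sgn ((∑ jd, θ k jd * x jd) - T k j))| :=
            Finset.abs_sum_le_sum_abs _ _
        _ ≤ ∑ k : Fin m, |c k| * (ε / (2 * v1)) := by
            apply Finset.sum_le_sum
            intro k _
            rw [abs_mul]
            exact mul_le_mul_of_nonneg_left (hmid k) (abs_nonneg _)
        _ = (∑ k, |c k|) * (ε / (2 * v1)) := by rw [← Finset.sum_mul]
        _ ≤ v1 * (ε / (2 * v1)) := mul_le_mul_of_nonneg_right hc hδ.le
        _ = ε / 2 := by field_simp
    have hAB : f x - ∑ k : Fin m, c k * ∑ j : Fin (K k), w k j *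
          sgn ((∑ jd, θ k jd * x jd) - T k j)
        = (f x - ∑ k : Fin m, c k *
            (Real.sqrt 2 * Real.sin (π * ((∑ jd, θ k jd * x jd) - bb k))))
          + ∑ k : Fin m, c k *
            (Real.sqrt 2 * Real.sin (π * ((∑ jd, θ k jd * x jd) - bb k))
              - ∑ j : Fin (K k), w k j * sgn ((∑ jd, θ k jd * x jd) - T k j)) := by
      have hsplit : ∑ k : Fin m, c k *
            (Real.sqrt 2 * Real.sin (π * ((∑ jd, θ k jd * x jd) - bb k))
              - ∑ j : Fin (K k), w k j * sgn ((∑ jd, θ k jd * x jd) - T k j))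
          = (∑ k : Fin m, c k *
              (Real.sqrt 2 * Real.sin (π * ((∑ jd, θ k jd * x jd) - bb k))))
            - ∑ k : Fin m, c k * ∑ j : Fin (K k), w k j *
                sgn ((∑ jd, θ k jd * x jd) - T k j) := by
        rw [← Finset.sum_sub_distrib]
        apply Finset.sum_congr rfl
        intro k _
        ring
      rw [hsplit]
      ring
    rw [hAB]
    calc |(f x - ∑ k : Fin m, c k *
            (Real.sqrt 2 * Real.sin (π * ((∑ jd, θ k jd * x jd) - bb k))))
          + ∑ k : Fin m, c k *
            (Real.sqrt 2 * Real.sin (π * ((∑ jd, θ k jd * x jd) - bb k))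
              - ∑ j : Fin (K k), w k j * sgn ((∑ jd, θ k jd * x jd) - T k j))|
        ≤ |f x - ∑ k : Fin m, c k *
            (Real.sqrt 2 * Real.sin (π * ((∑ jd, θ k jd * x jd) - bb k)))|
          + |∑ k : Fin m, c k *
            (Real.sqrt 2 * Real.sin (π * ((∑ jd, θ k jd * x jd) - bb k))
              - ∑ j : Fin (K k), w k j * sgn ((∑ jd, θ k jd * x jd) - T k j))| :=
          abs_add_le _ _
      _ ≤ ε / 2 + ε / 2 := add_le_add hA hB
      _ = ε := by ring


end
end
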